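/- arXiv:2007.11386 — 10 statements merged into one kernel-verified Lean document; each statement's English description precedes it below -/
import Mathlib

section
/- If a random choice rule p satisfies Luce's Choice Axiom, then the support correspondence A ↦ supp p_A is a rational choice correspondence: it satisfies WARP, i.e., if B ⊆ A and supp p_A ∩ B ≠ ∅ then supp p_B = supp p_A ∩ B. -/
/-- If a random choice rule satisfies Luce's Choice Axiom, then its support
correspondence satisfies WARP: if `B ⊆ A` and `supp p_A ∩ B ≠ ∅` then
`supp p_B = supp p_A ∩ B`. -/
theorem choice_axiom_implies_support_warp
    {X : Type*} [DecidableEq X] (p : Finset X → X → ℝ)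
    (hpos : ∀ A a, 0 ≤ p A a)
    (hout : ∀ A a, a ∉ A → p A a = 0)
    (hsum : ∀ A : Finset X, A.Nonempty → ∑ a ∈ A, p A a = 1)
    (hCA : ∀ A B : Finset X, B.Nonempty → B ⊆ A → ∀ a ∈ B,
      p A a = p B a * ∑ b ∈ B, p A b) :
    ∀ A B : Finset X, B.Nonempty → B ⊆ A →
      (A.filter (fun a => 0 < p A a) ∩ B).Nonempty →
      B.filter (fun a => 0 < p B a) = A.filter (fun a => 0 < p A a) ∩ B := by
  intro A B hB hBA hne
  obtain ⟨c, hc⟩ := hne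
  simp only [Finset.mem_inter, Finset.mem_filter] at hc
  obtain ⟨⟨hcA, hcpos⟩, hcB⟩ := hc
  have hs : 0 < ∑ b ∈ B, p A b :=
    Finset.sum_pos' (fun b _ => hpos A b) ⟨c, hcB, hcpos⟩
  ext a
  simp only [Finset.mem_inter, Finset.mem_filter]
  constructor
  · rintro ⟨haB, hpa⟩
    refine ⟨⟨hBA haB, ?_⟩, haB⟩
    rw [hCA A B hB hBA a haB]
    exact mul_pos hpa hs
  · rintro ⟨⟨haA, hpa⟩, haB⟩
    refine ⟨haB, ?_⟩
    rw [hCA A B hB hBA a haB] at hpa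
    nlinarith [hpos B a]
end

section
/- Let v : X → (0,∞) and let Γ : 𝒜 → 𝒜 be a choice correspondence (Γ(A) ⊆ A nonempty) satisfying WARP. Then the function p defined by p(a,A) = v(a)/Σ_{b∈Γ(A)} v(b) if a ∈ Γ(A) and p(a,A) = 0 otherwise, is a random choice rule satisfying Luce's Choice Axiom, and supp p_A = Γ(A) for all A. -/
/-- If `v : X → (0,∞)` and `Γ` is a choice correspondence satisfying WARP, then
`p(a,A) = v(a)/Σ_{b∈Γ(A)} v(b)` for `a ∈ Γ(A)` (and `0` otherwise) defines a random
choice rule satisfying Luce's Choice Axiom, with `supp p_A = Γ(A)`. -/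
theorem luce_form_satisfies_choice_axiom
    {X : Type*} [DecidableEq X] (v : X → ℝ) (hv : ∀ x, 0 < v x)
    (Γ : Finset X → Finset X)
    (hΓsub : ∀ A : Finset X, A.Nonempty → Γ A ⊆ A)
    (hΓne : ∀ A : Finset X, A.Nonempty → (Γ A).Nonempty)
    (hWARP : ∀ A B : Finset X, B.Nonempty → B ⊆ A →
      (Γ A ∩ B).Nonempty → Γ B = Γ A ∩ B)
    (p : Finset X → X → ℝ)
    (hp : ∀ A : Finset X, ∀ a : X,
      p A a = if a ∈ Γ A then v a / ∑ b ∈ Γ A, v b else 0) :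
    (∀ A a, 0 ≤ p A a) ∧
    (∀ A a, a ∉ A → A.Nonempty → p A a = 0) ∧
    (∀ A : Finset X, A.Nonempty → ∑ a ∈ A, p A a = 1) ∧
    (∀ A B : Finset X, B.Nonempty → B ⊆ A → ∀ a ∈ B,
      p A a = p B a * ∑ b ∈ B, p A b) ∧
    (∀ A : Finset X, A.Nonempty → A.filter (fun a => 0 < p A a) = Γ A) := by
  have hSpos : ∀ A : Finset X, (Γ A).Nonempty → 0 < ∑ b ∈ Γ A, v b := by
    intro A hA
    exact Finset.sum_pos (fun b _ => hv b) hA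
  have hnonneg : ∀ A a, 0 ≤ p A a := by
    intro A a
    rw [hp]
    split
    · rename_i h
      have hS := hSpos A ⟨a, h⟩
      exact div_nonneg (hv _).le hS.le
    · exact le_rfl
  -- partial sum over subsets B
  have hsum : ∀ A B : Finset X, A.Nonempty → B ⊆ A →
      ∑ b ∈ B, p A b = (∑ b ∈ Γ A ∩ B, v b) / ∑ b ∈ Γ A, v b := by
    intro A B hA hBA
    have : ∑ b ∈ B, p A b = ∑ b ∈ B, if b ∈ Γ A then v b / ∑ c ∈ Γ A, v c else 0 := by
      exact Finset.sum_congr rfl fun b _ => hp A b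
    rw [this, Finset.sum_ite_mem, Finset.inter_comm, Finset.sum_div]
  refine ⟨hnonneg, ?_, ?_, ?_, ?_⟩
  · intro A a haA hA
    rw [hp, if_neg (fun h => haA (hΓsub A hA h))]
  · intro A hA
    rw [hsum A A hA le_rfl, Finset.inter_eq_left.mpr (hΓsub A hA)]
    exact div_self (ne_of_gt (hSpos A (hΓne A hA)))
  · intro A B hB hBA a haB
    have hA : A.Nonempty := hB.mono hBA
    rw [hsum A B hA hBA]
    by_cases hcap : (Γ A ∩ B).Nonempty
    · have hΓB : Γ B = Γ A ∩ B := hWARP A B hB hBA hcap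
      by_cases haΓB : a ∈ Γ B
      · have haΓA : a ∈ Γ A := (Finset.mem_inter.mp (hΓB ▸ haΓB)).1
        rw [hp A a, hp B a, if_pos haΓA, if_pos haΓB, hΓB]
        have h1 : (0:ℝ) < ∑ b ∈ Γ A ∩ B, v b := Finset.sum_pos (fun b _ => hv b) hcap
        have h2 : (0:ℝ) < ∑ b ∈ Γ A, v b := hSpos A (hΓne A hA)
        field_simp
      · have haΓA : a ∉ Γ A := fun h => haΓB (hΓB ▸ Finset.mem_inter.mpr ⟨h, haB⟩)
        rw [hp A a, hp B a, if_neg haΓA, if_neg haΓB, zero_mul]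
    · rw [Finset.not_nonempty_iff_eq_empty] at hcap
      have haΓA : a ∉ Γ A := fun h => by
        have : a ∈ Γ A ∩ B := Finset.mem_inter.mpr ⟨h, haB⟩
        simp [hcap] at this
      rw [hp A a, if_neg haΓA, hcap]
      simp
  · intro A hA
    ext a
    simp only [Finset.mem_filter]
    constructor
    · rintro ⟨haA, hpos⟩
      by_contra h
      rw [hp A a, if_neg h] at hpos
      exact lt_irrefl 0 hpos
    · intro h
      refine ⟨hΓsub A hA h, ?_⟩
      rw [hp A a, if_pos h]
      exact div_pos (hv a) (hSpos A (hΓne A hA))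
end

section
/- A random choice rule p satisfies Luce's Choice Axiom if and only if there exist a function v : X → (0,∞) and a choice correspondence Γ satisfying WARP such that p(a,A) = v(a)/Σ_{b∈Γ(A)} v(b) if a ∈ Γ(A) and p(a,A) = 0 otherwise, for all A ∈ 𝒜 and a ∈ A. Moreover in this case Γ is unique and equals the support correspondence of p. -/
open Finset

set_option linter.unusedSectionVars false

namespace LuceHelp

variable {X : Type*} [DecidableEq X]

/-- `a` and `b` are both chosen with positive probability from the pair `{a,b}`. -/
def rel (p : Finset X → X → ℝ) (a b : X) : Prop := 0 < p {a, b} a ∧ 0 < p {a, b} b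

/-- support of `p` on `A` -/
noncomputable def supp (p : Finset X → X → ℝ) (A : Finset X) : Finset X :=
  A.filter (fun a => 0 < p A a)

lemma mem_supp {p : Finset X → X → ℝ} {A : Finset X} {a : X} :
    a ∈ supp p A ↔ a ∈ A ∧ 0 < p A a := by simp [supp]

lemma supp_subset (p : Finset X → X → ℝ) (A : Finset X) : supp p A ⊆ A :=
  filter_subset _ _

lemma supp_nonempty (p : Finset X → X → ℝ)
    (hpos : ∀ A a, 0 ≤ p A a)
    (hsum : ∀ A : Finset X, A.Nonempty → ∑ a ∈ A, p A a = 1)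
    {A : Finset X} (hA : A.Nonempty) : (supp p A).Nonempty := by
  by_contra h
  have h0 : ∀ a ∈ A, p A a = 0 := by
    intro a ha
    have : ¬ (0 < p A a) := fun hlt => h ⟨a, mem_supp.mpr ⟨ha, hlt⟩⟩
    linarith [hpos A a]
  have := hsum A hA
  rw [sum_eq_zero h0] at this
  norm_num at this

lemma sum_supp (p : Finset X → X → ℝ)
    (hpos : ∀ A a, 0 ≤ p A a) (A : Finset X) :
    ∑ b ∈ supp p A, p A b = ∑ b ∈ A, p A b := by
  refine sum_subset (supp_subset p A) ?_
  intro x hx hnx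
  have : ¬ (0 < p A x) := fun h => hnx (mem_supp.mpr ⟨hx, h⟩)
  linarith [hpos A x]

section Luce

variable {p : Finset X → X → ℝ}
  (hpos : ∀ A a, 0 ≤ p A a)
  (hsum : ∀ A : Finset X, A.Nonempty → ∑ a ∈ A, p A a = 1)
  (hl : ∀ A B : Finset X, B.Nonempty → B ⊆ A → ∀ a ∈ B,
        p A a = p B a * ∑ b ∈ B, p A b)

include hl

lemma luce_step {A : Finset X} {x y : X} (hx : x ∈ A) (hy : y ∈ A) :
    p A x * p {x, y} y = p A y * p {x, y} x := by
  have hB : ({x, y} : Finset X) ⊆ A := by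
    intro z hz
    rcases mem_insert.mp hz with h | h
    · exact h ▸ hx
    · exact (mem_singleton.mp h) ▸ hy
  have h1 := hl A {x, y} ⟨x, by simp⟩ hB x (by simp)
  have h2 := hl A {x, y} ⟨x, by simp⟩ hB y (by simp)
  rw [h1, h2]; ring

include hpos

lemma warp_supp {A B : Finset X} (hBne : B.Nonempty) (hBA : B ⊆ A)
    (hint : (supp p A ∩ B).Nonempty) : supp p B = supp p A ∩ B := by
  obtain ⟨c, hc⟩ := hint
  have hcA := mem_supp.mp (mem_inter.mp hc).1
  have hcB := (mem_inter.mp hc).2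
  have hs : 0 < ∑ b ∈ B, p A b :=
    sum_pos' (fun i _ => hpos A i) ⟨c, hcB, hcA.2⟩
  ext x
  simp only [mem_supp, mem_inter]
  constructor
  · rintro ⟨hxB, hxp⟩
    refine ⟨⟨hBA hxB, ?_⟩, hxB⟩
    rw [hl A B hBne hBA x hxB]
    exact mul_pos hxp hs
  · rintro ⟨⟨hxA, hxp⟩, hxB⟩
    refine ⟨hxB, ?_⟩
    have hval := hl A B hBne hBA x hxB
    by_contra hle
    have hz : p B x = 0 := le_antisymm (not_lt.mp hle) (hpos B x)
    rw [hz, zero_mul] at hval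
    linarith

lemma rel_of_mem_supp {A : Finset X} {a b : X}
    (ha : a ∈ supp p A) (hb : b ∈ supp p A) : rel p a b := by
  have haA := (mem_supp.mp ha).1
  have hbA := (mem_supp.mp hb).1
  have hBA : ({a, b} : Finset X) ⊆ A := by
    intro z hz
    rcases mem_insert.mp hz with h | h
    · exact h ▸ haA
    · exact (mem_singleton.mp h) ▸ hbA
  have hint : (supp p A ∩ ({a, b} : Finset X)).Nonempty :=
    ⟨a, mem_inter.mpr ⟨ha, by simp⟩⟩
  have hw := warp_supp hpos hl ⟨a, by simp⟩ hBA hint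
  have ha' : a ∈ supp p ({a, b} : Finset X) := by
    rw [hw]; exact mem_inter.mpr ⟨ha, by simp⟩
  have hb' : b ∈ supp p ({a, b} : Finset X) := by
    rw [hw]; exact mem_inter.mpr ⟨hb, by simp⟩
  exact ⟨(mem_supp.mp ha').2, (mem_supp.mp hb').2⟩

lemma mem_supp_of_rel {T : Finset X} {x y : X}
    (hx : x ∈ supp p T) (hy : y ∈ T) (hr : rel p x y) : y ∈ supp p T := by
  have hBT : ({x, y} : Finset X) ⊆ T := by
    intro z hz
    rcases mem_insert.mp hz with h | h
    · exact h ▸ (supp_subset p T hx)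
    · exact (mem_singleton.mp h) ▸ hy
  have hint : (supp p T ∩ ({x, y} : Finset X)).Nonempty :=
    ⟨x, mem_inter.mpr ⟨hx, by simp⟩⟩
  have hw := warp_supp hpos hl ⟨x, by simp⟩ hBT hint
  have hy' : y ∈ supp p ({x, y} : Finset X) := mem_supp.mpr ⟨by simp, hr.2⟩
  rw [hw] at hy'
  exact (mem_inter.mp hy').1

include hsum

omit hpos hl in
lemma rel_refl (a : X) : rel p a a := by
  have h1 : p {a, a} a = 1 := by
    have := hsum {a} ⟨a, mem_singleton_self a⟩
    simp only [sum_singleton] at this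
    simpa using this
  constructor <;> (rw [h1]; norm_num)

omit hpos hl hsum in
lemma rel_symm {a b : X} (h : rel p a b) : rel p b a := by
  have hc : ({b, a} : Finset X) = {a, b} := pair_comm b a
  exact ⟨by rw [hc]; exact h.2, by rw [hc]; exact h.1⟩

lemma rel_trans {a b c : X} (hab : rel p a b) (hbc : rel p b c) : rel p a c := by
  set T : Finset X := {a, b, c} with hT
  have haT : a ∈ T := by simp [hT]
  have hbT : b ∈ T := by simp [hT]
  have hcT : c ∈ T := by simp [hT]
  obtain ⟨x, hx⟩ := supp_nonempty p hpos hsum (⟨a, haT⟩ : T.Nonempty)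
  have hxT := supp_subset p T hx
  have key : a ∈ supp p T ∧ c ∈ supp p T := by
    have hstep : ∀ u v : X, u ∈ supp p T → v ∈ T → rel p u v → v ∈ supp p T :=
      fun u v hu hv hr => mem_supp_of_rel hpos hl hu hv hr
    rcases (by simpa [hT] using hxT : x = a ∨ x = b ∨ x = c) with h | h | h
    · rw [h] at hx
      have hb := hstep a b hx hbT hab
      exact ⟨hx, hstep b c hb hcT hbc⟩
    · rw [h] at hx
      have ha := hstep b a hx haT (rel_symm hab)
      exact ⟨ha, hstep b c hx hcT hbc⟩
    · rw [h] at hx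
      have hb := hstep c b hx hbT (rel_symm hbc)
      exact ⟨hstep b a hb haT (rel_symm hab), hx⟩
  exact rel_of_mem_supp hpos hl key.1 key.2

lemma rel_equiv : Equivalence (rel p) :=
  ⟨fun a => rel_refl hsum a, fun h => rel_symm h,
   fun h1 h2 => rel_trans hpos hsum hl h1 h2⟩

end Luce

/-- a representative of the `rel p` class of `a` -/
noncomputable def repE (p : Finset X → X → ℝ) (a : X) : X :=
  haveI : Nonempty X := ⟨a⟩
  Classical.epsilon (rel p a)

lemma rel_repE {p : Finset X → X → ℝ} (h : Equivalence (rel p)) (a : X) :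
    rel p a (repE p a) :=
  Classical.epsilon_spec (⟨a, h.refl a⟩ : ∃ y, rel p a y)

lemma repE_eq {p : Finset X → X → ℝ} (h : Equivalence (rel p)) {a b : X}
    (hab : rel p a b) : repE p a = repE p b := by
  have hpred : rel p a = rel p b :=
    funext fun x => propext ⟨fun hx => h.trans (h.symm hab) hx, fun hx => h.trans hab hx⟩
  unfold repE
  rw [hpred]

/-- the Luce value function -/
noncomputable def vfun (p : Finset X → X → ℝ) (a : X) : ℝ :=
  p {repE p a, a} a / p {repE p a, a} (repE p a)

lemma vfun_pos {p : Finset X → X → ℝ} (h : Equivalence (rel p)) (a : X) :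
    0 < vfun p a := by
  have hr : rel p (repE p a) a := h.symm (rel_repE h a)
  exact div_pos hr.2 hr.1

section Main

variable {p : Finset X → X → ℝ}
  (hpos : ∀ A a, 0 ≤ p A a)
  (hsum : ∀ A : Finset X, A.Nonempty → ∑ a ∈ A, p A a = 1)
  (hl : ∀ A B : Finset X, B.Nonempty → B ⊆ A → ∀ a ∈ B,
        p A a = p B a * ∑ b ∈ B, p A b)

include hpos hsum hl

lemma vfun_rel {a b : X} (hab : rel p a b) :
    vfun p a * p {a, b} b = vfun p b * p {a, b} a := by
  have h : Equivalence (rel p) := rel_equiv hpos hsum hl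
  set c := repE p a with hc
  have hcb : repE p b = c := (repE_eq h hab).symm
  have hca : rel p c a := h.symm (rel_repE h a)
  have hcb' : rel p c b := by rw [← hcb]; exact h.symm (rel_repE h b)
  set T : Finset X := {a, b, c} with hT
  have haT : a ∈ T := by simp [hT]
  have hbT : b ∈ T := by simp [hT]
  have hcT : c ∈ T := by simp [hT]
  -- all of a, b, c are in the support of T
  have key : a ∈ supp p T ∧ b ∈ supp p T ∧ c ∈ supp p T := by
    obtain ⟨x, hx⟩ := supp_nonempty p hpos hsum (⟨a, haT⟩ : T.Nonempty)
    have hxT := supp_subset p T hx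
    have hstep : ∀ u v : X, u ∈ supp p T → v ∈ T → rel p u v → v ∈ supp p T :=
      fun u v hu hv hr => mem_supp_of_rel hpos hl hu hv hr
    rcases (by simpa [hT] using hxT : x = a ∨ x = b ∨ x = c) with hxx | hxx | hxx
    · rw [hxx] at hx
      have hb := hstep a b hx hbT hab
      exact ⟨hx, hb, hstep a c hx hcT (h.symm hca)⟩
    · rw [hxx] at hx
      have ha := hstep b a hx haT (h.symm hab)
      exact ⟨ha, hx, hstep b c hx hcT (h.symm hcb')⟩
    · rw [hxx] at hx
      exact ⟨hstep c a hx haT hca, hstep c b hx hbT hcb', hx⟩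
  have pa : 0 < p T a := (mem_supp.mp key.1).2
  have pb : 0 < p T b := (mem_supp.mp key.2.1).2
  have pc : 0 < p T c := (mem_supp.mp key.2.2).2
  have e1 := luce_step hl haT hbT
  have e2 := luce_step hl hcT haT
  have e3 := luce_step hl hcT hbT
  have hgoal : vfun p a = p {c, a} a / p {c, a} c := by
    simp only [vfun, ← hc]
  have hgoal' : vfun p b = p {c, b} b / p {c, b} c := by
    simp only [vfun, hcb]
  rw [hgoal, hgoal', div_mul_eq_mul_div, div_mul_eq_mul_div,
    div_eq_div_iff (ne_of_gt hca.1) (ne_of_gt hcb'.1)]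
  apply mul_left_cancel₀ (show (p T a * p T b * p T c) ≠ 0 from
    ne_of_gt (mul_pos (mul_pos pa pb) pc))
  linear_combination ((p T a * p {a, b} b) * (p T b * p {c, b} c)) * e2 +
    ((p T a * p {c, a} c) * (p T b * p {c, b} c)) * e1 -
    ((p T a * p {c, a} c) * (p T b * p {a, b} a)) * e3

lemma vfun_supp {A : Finset X} {a b : X}
    (ha : a ∈ supp p A) (hb : b ∈ supp p A) :
    vfun p a * p A b = vfun p b * p A a := by
  have hab := rel_of_mem_supp hpos hl ha hb
  have haA := (mem_supp.mp ha).1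
  have hbA := (mem_supp.mp hb).1
  have hBA : ({a, b} : Finset X) ⊆ A := by
    intro z hz
    rcases mem_insert.mp hz with h | h
    · exact h ▸ haA
    · exact (mem_singleton.mp h) ▸ hbA
  have h1 := hl A {a, b} ⟨a, by simp⟩ hBA a (by simp)
  have h2 := hl A {a, b} ⟨a, by simp⟩ hBA b (by simp)
  rw [h1, h2]
  linear_combination (∑ x ∈ ({a, b} : Finset X), p A x) * vfun_rel hpos hsum hl hab

lemma luce_rep {A : Finset X} (hA : A.Nonempty) {a : X} (ha : a ∈ supp p A) :
    p A a * ∑ b ∈ supp p A, vfun p b = vfun p a := by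
  have h1 : ∑ b ∈ supp p A, p A a * vfun p b = ∑ b ∈ supp p A, vfun p a * p A b := by
    refine sum_congr rfl fun b hb => ?_
    have := vfun_supp hpos hsum hl ha hb
    linarith
  rw [mul_sum, h1, ← mul_sum, sum_supp p hpos, hsum A hA, mul_one]

end Main

end LuceHelp

open LuceHelp Finset in
/-- A random choice rule `p` satisfies Luce's Choice Axiom iff there exist
`v : X → (0,∞)` and a choice correspondence `Γ` satisfying WARP such that
`p(a,A) = v(a)/Σ_{b∈Γ(A)} v(b)` if `a ∈ Γ(A)` and `0` otherwise; in this case `Γ` is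
unique and equals the support correspondence of `p`. -/
theorem choice_axiom_iff_luce_form
    {X : Type*} [DecidableEq X] (p : Finset X → X → ℝ)
    (hpos : ∀ A a, 0 ≤ p A a)
    (hout : ∀ A a, a ∉ A → p A a = 0)
    (hsum : ∀ A : Finset X, A.Nonempty → ∑ a ∈ A, p A a = 1) :
    ((∀ A B : Finset X, B.Nonempty → B ⊆ A → ∀ a ∈ B,
        p A a = p B a * ∑ b ∈ B, p A b) ↔
      (∃ (v : X → ℝ) (Γ : Finset X → Finset X),
        (∀ x, 0 < v x) ∧
        (∀ A : Finset X, A.Nonempty → Γ A ⊆ A ∧ (Γ A).Nonempty) ∧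
        (∀ A B : Finset X, B.Nonempty → B ⊆ A →
          (Γ A ∩ B).Nonempty → Γ B = Γ A ∩ B) ∧
        (∀ A : Finset X, A.Nonempty → ∀ a ∈ A,
          p A a = if a ∈ Γ A then v a / ∑ b ∈ Γ A, v b else 0))) ∧
    (∀ (v : X → ℝ) (Γ : Finset X → Finset X),
      (∀ x, 0 < v x) →
      (∀ A : Finset X, A.Nonempty → Γ A ⊆ A ∧ (Γ A).Nonempty) →
      (∀ A B : Finset X, B.Nonempty → B ⊆ A →
        (Γ A ∩ B).Nonempty → Γ B = Γ A ∩ B) →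
      (∀ A : Finset X, A.Nonempty → ∀ a ∈ A,
        p A a = if a ∈ Γ A then v a / ∑ b ∈ Γ A, v b else 0) →
      ∀ A : Finset X, A.Nonempty → Γ A = A.filter (fun a => 0 < p A a)) := by
  constructor
  · constructor
    · -- Luce's axiom implies the Luce form
      intro hl
      have hequiv : Equivalence (rel p) := rel_equiv hpos hsum hl
      refine ⟨vfun p, fun A => supp p A, fun x => vfun_pos hequiv x,
        fun A hA => ⟨supp_subset p A, supp_nonempty p hpos hsum hA⟩,
        fun A B hBne hBA hint => warp_supp hpos hl hBne hBA hint, ?_⟩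
      intro A hA a haA
      by_cases h : a ∈ supp p A
      · rw [if_pos h]
        have hS : 0 < ∑ b ∈ supp p A, vfun p b :=
          sum_pos (fun i _ => vfun_pos hequiv i) (supp_nonempty p hpos hsum hA)
        rw [eq_div_iff (ne_of_gt hS)]
        exact luce_rep hpos hsum hl hA h
      · rw [if_neg h]
        have hnp : ¬ (0 < p A a) := fun hc => h (mem_supp.mpr ⟨haA, hc⟩)
        linarith [hpos A a]
    · -- the Luce form implies Luce's axiom
      rintro ⟨v, Γ, hv, hΓ, hwarp, hrep⟩ A B hBne hBA a haB
      have hAne : A.Nonempty := ⟨a, hBA haB⟩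
      obtain ⟨hΓAs, hΓAne⟩ := hΓ A hAne
      have hSA : 0 < ∑ b ∈ Γ A, v b := sum_pos (fun i _ => hv i) hΓAne
      have hsumB : ∑ b ∈ B, p A b = (∑ b ∈ Γ A ∩ B, v b) / ∑ b ∈ Γ A, v b := by
        have hterm : ∀ b ∈ B, p A b = if b ∈ Γ A then v b / ∑ c ∈ Γ A, v c else 0 :=
          fun b hb => hrep A hAne b (hBA hb)
        rw [sum_congr rfl hterm, sum_ite_mem, inter_comm, sum_div]
      by_cases hint : (Γ A ∩ B).Nonempty
      · have hΓB := hwarp A B hBne hBA hint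
        have hSB : 0 < ∑ b ∈ Γ A ∩ B, v b := sum_pos (fun i _ => hv i) hint
        rw [hrep A hAne a (hBA haB), hrep B hBne a haB, hΓB, hsumB]
        by_cases haΓ : a ∈ Γ A
        · rw [if_pos haΓ, if_pos (mem_inter.mpr ⟨haΓ, haB⟩)]
          field_simp
        · rw [if_neg haΓ, if_neg (fun hc => haΓ (mem_inter.mp hc).1), zero_mul]
      · have hempty : Γ A ∩ B = ∅ := not_nonempty_iff_eq_empty.mp hint
        rw [hsumB, hempty, sum_empty, zero_div, mul_zero,
          hrep A hAne a (hBA haB),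
          if_neg (fun hc => hint ⟨a, mem_inter.mpr ⟨hc, haB⟩⟩)]
  · -- uniqueness of Γ
    intro v Γ hv hΓ hwarp hrep A hA
    obtain ⟨hΓs, hΓne⟩ := hΓ A hA
    have hS : 0 < ∑ b ∈ Γ A, v b := sum_pos (fun i _ => hv i) hΓne
    ext x
    simp only [mem_filter]
    constructor
    · intro hx
      refine ⟨hΓs hx, ?_⟩
      rw [hrep A hA x (hΓs hx), if_pos hx]
      exact div_pos (hv x) hS
    · rintro ⟨hxA, hxp⟩
      by_contra hc
      rw [hrep A hA x hxA, if_neg hc] at hxp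
      exact lt_irrefl 0 hxp
end

section
/- A random choice rule p satisfies Luce's Choice Axiom if and only if its support correspondence satisfies WARP and the Renyi conditioning identity p_B(a) = p_A(a)/p_A(B) holds for all B ⊆ A in 𝒜 and all a ∈ B ∩ supp p_A. -/
/-- A random choice rule `p` satisfies Luce's Choice Axiom iff its support
correspondence satisfies WARP and the Renyi conditioning identity
`p_B(a) = p_A(a)/p_A(B)` holds for all `B ⊆ A` and `a ∈ B ∩ supp p_A`. -/
theorem choice_axiom_iff_warp_and_conditioning
    {X : Type*} [DecidableEq X] (p : Finset X → X → ℝ)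
    (hpos : ∀ A a, 0 ≤ p A a)
    (hout : ∀ A a, a ∉ A → p A a = 0)
    (hsum : ∀ A : Finset X, A.Nonempty → ∑ a ∈ A, p A a = 1) :
    (∀ A B : Finset X, B.Nonempty → B ⊆ A → ∀ a ∈ B,
      p A a = p B a * ∑ b ∈ B, p A b) ↔
    ((∀ A B : Finset X, B.Nonempty → B ⊆ A →
        (A.filter (fun a => 0 < p A a) ∩ B).Nonempty →
        B.filter (fun a => 0 < p B a) = A.filter (fun a => 0 < p A a) ∩ B) ∧
      (∀ A B : Finset X, B.Nonempty → B ⊆ A → ∀ a ∈ B, 0 < p A a →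
        p B a = p A a / ∑ b ∈ B, p A b)) := by
  constructor
  · intro hL
    constructor
    · intro A B hBne hBA ⟨c, hc⟩
      simp only [Finset.mem_inter, Finset.mem_filter] at hc
      have hSpos : 0 < ∑ b ∈ B, p A b := by
        refine lt_of_lt_of_le hc.1.2 ?_
        exact Finset.single_le_sum (fun b _ => hpos A b) hc.2
      ext a
      simp only [Finset.mem_inter, Finset.mem_filter]
      constructor
      · rintro ⟨haB, haBpos⟩
        have := hL A B hBne hBA a haB
        exact ⟨⟨hBA haB, by rw [this]; positivity⟩, haB⟩
      · rintro ⟨⟨haA, haApos⟩, haB⟩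
        have := hL A B hBne hBA a haB
        refine ⟨haB, ?_⟩
        by_contra h
        have hz : p B a = 0 := le_antisymm (not_lt.mp h) (hpos B a)
        rw [hz, zero_mul] at this
        exact absurd this (ne_of_gt haApos)
    · intro A B hBne hBA a haB haApos
      have hSpos : 0 < ∑ b ∈ B, p A b := by
        refine lt_of_lt_of_le haApos ?_
        exact Finset.single_le_sum (fun b _ => hpos A b) haB
      have := hL A B hBne hBA a haB
      field_simp
      linarith [this]
  · rintro ⟨hW, hC⟩ A B hBne hBA a haB
    set S := ∑ b ∈ B, p A b with hS
    rcases eq_or_lt_of_le (Finset.sum_nonneg (fun b _ => hpos A b) : (0:ℝ) ≤ S) with h0 | hSpos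
    · have hall : ∀ b ∈ B, p A b = 0 :=
        (Finset.sum_eq_zero_iff_of_nonneg (fun b _ => hpos A b)).mp h0.symm
      rw [hall a haB, hS, ← h0, mul_zero]
    · rcases lt_or_eq_of_le (hpos A a) with haApos | haz
      · have := hC A B hBne hBA a haB haApos
        rw [this]
        field_simp
        exact hS.symm
      · -- p A a = 0; show p B a = 0
        obtain ⟨c, hcB, hcpos⟩ : ∃ c ∈ B, 0 < p A c := by
          by_contra h
          push_neg at h
          have : S = 0 := Finset.sum_eq_zero (fun b hb =>
            le_antisymm (h b hb) (hpos A b))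
          linarith
        have hne : (A.filter (fun a => 0 < p A a) ∩ B).Nonempty :=
          ⟨c, Finset.mem_inter.mpr ⟨Finset.mem_filter.mpr ⟨hBA hcB, hcpos⟩, hcB⟩⟩
        have heq := hW A B hBne hBA hne
        have haNot : a ∉ B.filter (fun a => 0 < p B a) := by
          rw [heq]
          simp only [Finset.mem_inter, Finset.mem_filter]
          rintro ⟨⟨_, hpos'⟩, _⟩
          exact absurd haz (ne_of_gt hpos').symm
        have hz : p B a = 0 := by
          by_contra h
          exact haNot (Finset.mem_filter.mpr ⟨haB, lt_of_le_of_ne (hpos B a) (Ne.symm h)⟩)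
        rw [hz, ← haz, zero_mul]
end

section
/- Let p be a random choice rule satisfying Luce's Choice Axiom, with support correspondence Γ(A) = supp p_A. Then the relation a ≿ b defined by p(a,{a,b}) > 0 is complete and transitive, and Γ(A) = {a ∈ A : a ≿ b for all b ∈ A} for every A ∈ 𝒜. -/
/-- Under Luce's Choice Axiom, the revealed relation `a ≿ b ↔ p(a,{a,b}) > 0` is
complete and transitive, and the support of `p_A` is exactly the set of
`≿`-maximal elements of `A`. -/
theorem support_is_argmax_of_revealed_preference
    {X : Type*} [DecidableEq X] (p : Finset X → X → ℝ)
    (hpos : ∀ A a, 0 ≤ p A a)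
    (hout : ∀ A a, a ∉ A → p A a = 0)
    (hsum : ∀ A : Finset X, A.Nonempty → ∑ a ∈ A, p A a = 1)
    (hCA : ∀ A B : Finset X, B.Nonempty → B ⊆ A → ∀ a ∈ B,
      p A a = p B a * ∑ b ∈ B, p A b) :
    (∀ a b : X, 0 < p {a, b} a ∨ 0 < p {a, b} b) ∧
    (∀ a b c : X, 0 < p {a, b} a → 0 < p {b, c} b → 0 < p {a, c} a) ∧
    (∀ A : Finset X, A.Nonempty →
      A.filter (fun a => 0 < p A a) = A.filter (fun a => ∀ b ∈ A, 0 < p {a, b} a)) := by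
  -- key consequence of Luce's axiom for pairs inside A
  have hkey : ∀ (A : Finset X) (a b : X), a ∈ A → b ∈ A →
      p A a = p {a, b} a * ∑ x ∈ ({a, b} : Finset X), p A x := by
    intro A a b ha hb
    refine hCA A {a, b} ⟨a, by simp⟩ ?_ a (by simp)
    intro x hx
    simp only [Finset.mem_insert, Finset.mem_singleton] at hx
    rcases hx with rfl | rfl <;> assumption
  -- completeness
  have hcomp : ∀ a b : X, 0 < p {a, b} a ∨ 0 < p {a, b} b := by
    intro a b
    by_contra h
    push_neg at h
    have ha0 : p {a, b} a = 0 := le_antisymm h.1 (hpos _ _)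
    have hb0 : p {a, b} b = 0 := le_antisymm h.2 (hpos _ _)
    have hs := hsum {a, b} ⟨a, by simp⟩
    have hz : ∑ x ∈ ({a, b} : Finset X), p {a, b} x = 0 := by
      apply Finset.sum_eq_zero
      intro x hx
      simp only [Finset.mem_insert, Finset.mem_singleton] at hx
      rcases hx with rfl | rfl <;> assumption
    linarith
  -- one direction of the support characterization
  have hfwd : ∀ (A : Finset X) (a b : X), a ∈ A → b ∈ A → 0 < p A a →
      0 < p {a, b} a := by
    intro A a b ha hb hpa
    have hk := hkey A a b ha hb
    by_contra h
    push_neg at h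
    have h0 : p {a, b} a = 0 := le_antisymm h (hpos _ _)
    rw [h0, zero_mul] at hk
    linarith
  refine ⟨hcomp, ?_, ?_⟩
  · -- transitivity
    intro a b c hab hbc
    by_cases hac : a = c
    · subst hac
      have h1 : ({a, a} : Finset X) = {a} := by simp
      rw [h1]
      have hs := hsum {a} ⟨a, by simp⟩
      simp only [Finset.sum_singleton] at hs
      linarith
    by_cases hab' : a = b
    · subst hab'; exact hbc
    by_cases hbc' : b = c
    · subst hbc'; exact hab
    by_contra h
    push_neg at h
    have hac0 : p {a, c} a = 0 := le_antisymm h (hpos _ _)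
    set A : Finset X := {a, b, c} with hAdef
    have haA : a ∈ A := by simp [hAdef]
    have hbA : b ∈ A := by simp [hAdef]
    have hcA : c ∈ A := by simp [hAdef]
    have hAa : p A a = 0 := by
      have hk := hkey A a c haA hcA
      rw [hac0, zero_mul] at hk
      exact hk
    have hAb : p A b = 0 := by
      have hk := hkey A a b haA hbA
      rw [Finset.sum_pair hab', hAa] at hk
      rcases mul_eq_zero.mp hk.symm with h1 | h1
      · linarith
      · linarith
    have hAc : p A c = 0 := by
      have hk := hkey A b c hbA hcA
      rw [Finset.sum_pair hbc', hAb] at hk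
      rcases mul_eq_zero.mp hk.symm with h1 | h1
      · linarith
      · linarith
    have hs := hsum A ⟨a, haA⟩
    have hz : ∑ x ∈ A, p A x = 0 := by
      apply Finset.sum_eq_zero
      intro x hx
      simp only [hAdef, Finset.mem_insert, Finset.mem_singleton] at hx
      rcases hx with rfl | rfl | rfl <;> assumption
    linarith
  · -- support = maximal elements
    intro A hA
    ext a
    simp only [Finset.mem_filter]
    constructor
    · rintro ⟨ha, hpa⟩
      exact ⟨ha, fun b hb => hfwd A a b ha hb hpa⟩
    · rintro ⟨ha, hall⟩
      refine ⟨ha, ?_⟩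
      by_contra h
      push_neg at h
      have hAa : p A a = 0 := le_antisymm h (hpos _ _)
      obtain ⟨b, hb, hpb⟩ : ∃ b ∈ A, 0 < p A b := by
        by_contra hc
        push_neg at hc
        have hz : ∑ x ∈ A, p A x = 0 :=
          Finset.sum_eq_zero fun x hx => le_antisymm (hc x hx) (hpos _ _)
        have hs := hsum A hA
        linarith
      have hk := hkey A a b ha hb
      have hS : 0 < ∑ x ∈ ({a, b} : Finset X), p A x := by
        have hle : p A b ≤ ∑ x ∈ ({a, b} : Finset X), p A x :=
          Finset.single_le_sum (fun x _ => hpos A x) (by simp)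
        linarith
      have hppos := mul_pos (hall b hb) hS
      linarith
end

section
/- Let Γ be a choice correspondence on the finite subsets of X satisfying WARP. Then the relation ≿ defined by a ≿ b iff a ∈ Γ({a,b}) is complete and transitive, and Γ(A) = {a ∈ A : a ≿ b for all b ∈ A} for all nonempty finite A. -/
/-- If a choice correspondence `Γ` satisfies WARP, then the revealed relation
`a ≿ b ↔ a ∈ Γ {a,b}` is complete and transitive, and
`Γ(A) = {a ∈ A : a ≿ b for all b ∈ A}`. -/
theorem warp_implies_rationalizable
    {X : Type*} [DecidableEq X] (Γ : Finset X → Finset X)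
    (hΓsub : ∀ A : Finset X, A.Nonempty → Γ A ⊆ A)
    (hΓne : ∀ A : Finset X, A.Nonempty → (Γ A).Nonempty)
    (hWARP : ∀ A B : Finset X, B.Nonempty → B ⊆ A →
      (Γ A ∩ B).Nonempty → Γ B = Γ A ∩ B) :
    (∀ a b : X, a ∈ Γ {a, b} ∨ b ∈ Γ {a, b}) ∧
    (∀ a b c : X, a ∈ Γ {a, b} → b ∈ Γ {b, c} → a ∈ Γ {a, c}) ∧
    (∀ A : Finset X, A.Nonempty →
      Γ A = A.filter (fun a => ∀ b ∈ A, a ∈ Γ {a, b})) := by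
  have pairne : ∀ a b : X, ({a, b} : Finset X).Nonempty := fun a b =>
    ⟨a, by simp⟩
  refine ⟨?_, ?_, ?_⟩
  · intro a b
    obtain ⟨x, hx⟩ := hΓne {a, b} (pairne a b)
    have hx' := hΓsub {a, b} (pairne a b) hx
    simp only [Finset.mem_insert, Finset.mem_singleton] at hx'
    rcases hx' with h | h
    · exact Or.inl (h ▸ hx)
    · exact Or.inr (h ▸ hx)
  · intro a b c hab hbc
    set A : Finset X := {a, b, c} with hA
    have hAne : A.Nonempty := ⟨a, by simp [hA]⟩
    have habA : ({a, b} : Finset X) ⊆ A := by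
      intro x hx; simp only [Finset.mem_insert, Finset.mem_singleton] at hx
      simp only [hA, Finset.mem_insert, Finset.mem_singleton]
      tauto
    have hbcA : ({b, c} : Finset X) ⊆ A := by
      intro x hx; simp only [Finset.mem_insert, Finset.mem_singleton] at hx
      simp only [hA, Finset.mem_insert, Finset.mem_singleton]
      tauto
    have hacA : ({a, c} : Finset X) ⊆ A := by
      intro x hx; simp only [Finset.mem_insert, Finset.mem_singleton] at hx
      simp only [hA, Finset.mem_insert, Finset.mem_singleton]
      tauto
    -- first: if b ∈ Γ A then a ∈ Γ A
    have hb_to_a : b ∈ Γ A → a ∈ Γ A := by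
      intro hb
      have h := hWARP A {a, b} (pairne a b) habA ⟨b, by simp [hb]⟩
      have : a ∈ Γ A ∩ {a, b} := h ▸ hab
      exact (Finset.mem_inter.mp this).1
    have hc_to_b : c ∈ Γ A → b ∈ Γ A := by
      intro hc
      have h := hWARP A {b, c} (pairne b c) hbcA ⟨c, by simp [hc]⟩
      have : b ∈ Γ A ∩ {b, c} := h ▸ hbc
      exact (Finset.mem_inter.mp this).1
    have ha : a ∈ Γ A := by
      obtain ⟨x, hx⟩ := hΓne A hAne
      have hx' := hΓsub A hAne hx
      simp only [hA, Finset.mem_insert, Finset.mem_singleton] at hx'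
      rcases hx' with h | h | h
      · exact h ▸ hx
      · exact hb_to_a (h ▸ hx)
      · exact hb_to_a (hc_to_b (h ▸ hx))
    have h := hWARP A {a, c} (pairne a c) hacA ⟨a, by simp [ha]⟩
    rw [h]
    exact Finset.mem_inter.mpr ⟨ha, by simp⟩
  · intro A hAne
    ext a
    simp only [Finset.mem_filter]
    constructor
    · intro ha
      refine ⟨hΓsub A hAne ha, fun b hb => ?_⟩
      have habA : ({a, b} : Finset X) ⊆ A := by
        intro x hx; simp only [Finset.mem_insert, Finset.mem_singleton] at hx
        rcases hx with h | h
        · exact h ▸ hΓsub A hAne ha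
        · exact h ▸ hb
      have h := hWARP A {a, b} (pairne a b) habA ⟨a, by simp [ha]⟩
      rw [h]
      exact Finset.mem_inter.mpr ⟨ha, by simp⟩
    · rintro ⟨haA, hall⟩
      obtain ⟨c, hc⟩ := hΓne A hAne
      have hcA := hΓsub A hAne hc
      have hacA : ({a, c} : Finset X) ⊆ A := by
        intro x hx; simp only [Finset.mem_insert, Finset.mem_singleton] at hx
        rcases hx with h | h
        · exact h ▸ haA
        · exact h ▸ hcA
      have h := hWARP A {a, c} (pairne a c) hacA ⟨c, by simp [hc]⟩
      have := h ▸ hall c hcA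
      exact (Finset.mem_inter.mp this).1
end

section
/- Let X be a separable metric space and let p be a random choice rule satisfying Luce's Choice Axiom, with induced weak preference a ≿ b iff p(a,{a,b}) > 0. Then p satisfies Continuity (if x_n → x and p(x_n,{x_n,y}) > 0 for all n then p(x,{x,y}) > 0, and if p(y,{y,x_n}) > 0 for all n then p(y,{y,x}) > 0) if and only if there exists a continuous u : X → ℝ such that supp p_A = argmax_{a∈A} u(a) for all finite nonempty A. -/
open scoped Classical

/-- A continuous total preorder on a topological space. -/
structure ContTotalPreorder (X : Type*) [TopologicalSpace X] where
  R : X → X → Prop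
  total : ∀ x y, R x y ∨ R y x
  trans : ∀ x y z, R x y → R y z → R x z
  closed_lower : ∀ y, IsClosed {x | R x y}
  closed_upper : ∀ y, IsClosed {x | R y x}

namespace ContTotalPreorder

variable {X : Type*} [TopologicalSpace X] (C : ContTotalPreorder X)

/-- strict relation -/
def P (x y : X) : Prop := ¬ C.R y x

theorem refl (x : X) : C.R x x := (C.total x x).elim id id

theorem r_of_p {x y : X} (h : C.P x y) : C.R x y := (C.total x y).resolve_right h

theorem p_trans_rl {x y z : X} (h1 : C.R x y) (h2 : C.P y z) : C.P x z :=
  fun hzx => h2 (C.trans _ _ _ hzx h1)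

theorem p_trans_lr {x y z : X} (h1 : C.P x y) (h2 : C.R y z) : C.P x z :=
  fun hzx => h1 (C.trans _ _ _ h2 hzx)

theorem p_irrefl (x : X) : ¬ C.P x x := fun h => h (C.refl x)

theorem p_asymm {x y : X} (h : C.P x y) : ¬ C.P y x := fun h' => h (C.r_of_p h')

theorem open_p_left (y : X) : IsOpen {x | C.P x y} := by
  have : {x | C.P x y} = {x | C.R y x}ᶜ := rfl
  rw [this]; exact (C.closed_upper y).isOpen_compl

theorem open_p_right (y : X) : IsOpen {x | C.P y x} := by
  have : {x | C.P y x} = {x | C.R x y}ᶜ := rfl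
  rw [this]; exact (C.closed_lower y).isOpen_compl

/-- a jump pair: T strictly above B, nothing in between -/
def Jump (T B : X) : Prop := C.P T B ∧ ∀ z, ¬ (C.P T z ∧ C.P z B)

theorem jump_eq {T B : X} (h : C.Jump T B) : {z | C.P z B} = {z | C.R z T} := by
  ext z
  constructor
  · intro hz
    by_contra hzT
    exact (h.2 z) ⟨hzT, hz⟩
  · intro hzT hBz
    exact h.1 (C.trans _ _ _ hBz hzT)

theorem jump_clopen {T B : X} (h : C.Jump T B) : IsClosed {z | C.P z B} := by
  rw [C.jump_eq h]; exact C.closed_lower T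

/-- midpoint choice function -/
noncomputable def mid (a b : X) : X :=
  if h : ∃ z, C.P a z ∧ C.P z b then h.choose else b

theorem mid_spec_strict {a b : X} (h : ∃ z, C.P a z ∧ C.P z b) :
    C.P a (C.mid a b) ∧ C.P (C.mid a b) b := by
  rw [mid, dif_pos h]; exact h.choose_spec

theorem mid_eq_of_not {a b : X} (h : ¬ ∃ z, C.P a z ∧ C.P z b) : C.mid a b = b := by
  rw [mid, dif_neg h]

theorem mid_upper {a b : X} (h : C.P a b) : C.P a (C.mid a b) := by
  by_cases hx : ∃ z, C.P a z ∧ C.P z b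
  · exact (C.mid_spec_strict hx).1
  · rw [C.mid_eq_of_not hx]; exact h

theorem mid_lower {a b : X} : C.R (C.mid a b) b := by
  by_cases hx : ∃ z, C.P a z ∧ C.P z b
  · exact C.r_of_p (C.mid_spec_strict hx).2
  · rw [C.mid_eq_of_not hx]; exact C.refl b

theorem not_exists_of_not_p {a b : X} (h : ¬ C.P a b) : ¬ ∃ z, C.P a z ∧ C.P z b := by
  rintro ⟨z, h1, h2⟩
  exact h (C.p_trans_lr h1 (C.r_of_p h2))

theorem mid_eq_of_not_p {a b : X} (h : ¬ C.P a b) : C.mid a b = b :=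
  C.mid_eq_of_not (C.not_exists_of_not_p h)

end ContTotalPreorder

namespace ContTotalPreorder

variable {X : Type*} [TopologicalSpace X] (C : ContTotalPreorder X)

/-- dyadic chain between `b` (index 0) and `a` (index `2^k`) -/
noncomputable def t (a b : X) : ℕ → ℕ → X
  | 0 => fun j => if j = 0 then b else a
  | (k+1) => fun j =>
      if j % 2 = 0 then t a b k (j / 2)
      else C.mid (t a b k (j / 2 + 1)) (t a b k (j / 2))

variable {a b : X}

theorem t_succ_even (k m : ℕ) : C.t a b (k+1) (2*m) = C.t a b k m := by
  have h1 : (2*m) % 2 = 0 := by omega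
  have h2 : (2*m)/2 = m := by omega
  show (if (2*m) % 2 = 0 then C.t a b k ((2*m)/2) else _) = _
  rw [if_pos h1, h2]

theorem t_succ_odd (k m : ℕ) :
    C.t a b (k+1) (2*m+1) = C.mid (C.t a b k (m+1)) (C.t a b k m) := by
  have h1 : ¬ (2*m+1) % 2 = 0 := by omega
  have h2 : (2*m+1)/2 = m := by omega
  show (if (2*m+1) % 2 = 0 then _ else C.mid (C.t a b k ((2*m+1)/2+1)) (C.t a b k ((2*m+1)/2))) = _
  rw [if_neg h1, h2]

theorem t_zero (k : ℕ) : C.t a b k 0 = b := by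
  induction k with
  | zero => simp [t]
  | succ k ih => have := C.t_succ_even (a := a) (b := b) k 0; simpa [ih] using this

theorem t_top (k : ℕ) {j : ℕ} (hj : 2^k ≤ j) : C.t a b k j = a := by
  induction k generalizing j with
  | zero => show (if j = 0 then b else a) = a; rw [if_neg (by omega)]
  | succ k ih =>
      rcases Nat.even_or_odd j with ⟨m, hm⟩ | ⟨m, hm⟩
      · have hm' : j = 2*m := by omega
        subst hm'
        rw [C.t_succ_even]
        exact ih (by rw [pow_succ] at hj; omega)
      · have hm' : j = 2*m+1 := by omega
        subst hm'
        rw [C.t_succ_odd]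
        have h1 : C.t a b k (m+1) = a := ih (by rw [pow_succ] at hj; omega)
        have h2 : C.t a b k m = a := ih (by rw [pow_succ] at hj; omega)
        rw [h1, h2]
        exact C.mid_eq_of_not_p (C.p_irrefl a)

theorem t_adj (hab : C.P a b) (k j : ℕ) : C.R (C.t a b k (j+1)) (C.t a b k j) := by
  induction k generalizing j with
  | zero =>
      show C.R (if j + 1 = 0 then b else a) (if j = 0 then b else a)
      rw [if_neg (by omega)]
      by_cases hj : j = 0
      · rw [if_pos hj]; exact C.r_of_p hab
      · rw [if_neg hj]; exact C.refl a
  | succ k ih =>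
      rcases Nat.even_or_odd j with ⟨m, hm⟩ | ⟨m, hm⟩
      · have hm' : j = 2*m := by omega
        subst hm'
        have e1 : (2*m)+1 = 2*m+1 := rfl
        rw [e1, C.t_succ_odd, C.t_succ_even]
        exact C.mid_lower
      · have hm' : j = 2*m+1 := by omega
        subst hm'
        have e1 : (2*m+1)+1 = 2*(m+1) := by omega
        rw [e1, C.t_succ_even, C.t_succ_odd]
        by_cases hP : C.P (C.t a b k (m+1)) (C.t a b k m)
        · exact C.r_of_p (C.mid_upper hP)
        · rw [C.mid_eq_of_not_p hP]
          exact ih m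

theorem t_mono (hab : C.P a b) (k : ℕ) {i j : ℕ} (hij : i ≤ j) :
    C.R (C.t a b k j) (C.t a b k i) := by
  induction j with
  | zero => have : i = 0 := by omega
            subst this; exact C.refl _
  | succ j ih =>
      rcases Nat.lt_or_ge i (j+1) with h | h
      · exact C.trans _ _ _ (C.t_adj hab k j) (ih (by omega))
      · have : i = j + 1 := by omega
        subst this; exact C.refl _

theorem t_strict_top (hab : C.P a b) (k : ℕ) {j : ℕ} (hj : j < 2^k) :
    C.P a (C.t a b k j) := by
  induction k generalizing j with
  | zero =>
      have : j = 0 := by simpa using hj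
      subst this
      show C.P a (if (0:ℕ) = 0 then b else a)
      simpa using hab
  | succ k ih =>
      rcases Nat.even_or_odd j with ⟨m, hm⟩ | ⟨m, hm⟩
      · have hm' : j = 2*m := by omega
        subst hm'
        rw [C.t_succ_even]
        exact ih (by rw [pow_succ] at hj; omega)
      · have hm' : j = 2*m+1 := by omega
        subst hm'
        rw [C.t_succ_odd]
        have hm1 : m < 2^k := by rw [pow_succ] at hj; omega
        by_cases hP : C.P (C.t a b k (m+1)) (C.t a b k m)
        · have h1 : C.R a (C.t a b k (m+1)) := by
            rcases Nat.lt_or_ge (m+1) (2^k) with h | h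
            · exact C.r_of_p (ih h)
            · rw [C.t_top k h]; exact C.refl a
          exact C.p_trans_rl h1 (C.mid_upper hP)
        · rw [C.mid_eq_of_not_p hP]
          exact ih hm1

theorem t_le_top (hab : C.P a b) (k j : ℕ) : C.R a (C.t a b k j) := by
  rcases Nat.lt_or_ge j (2^k) with h | h
  · exact C.r_of_p (C.t_strict_top hab k h)
  · rw [C.t_top k h]; exact C.refl a

theorem t_ge_bot (hab : C.P a b) (k j : ℕ) : C.R (C.t a b k j) b := by
  have := C.t_mono hab k (Nat.zero_le j)
  rwa [C.t_zero] at this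

theorem t_pow (k j m : ℕ) : C.t a b (k+m) (j * 2^m) = C.t a b k j := by
  induction m with
  | zero => simp
  | succ m ih =>
      have e1 : k + (m+1) = (k+m) + 1 := by omega
      have e2 : j * 2^(m+1) = 2 * (j * 2^m) := by ring
      rw [e1, e2, C.t_succ_even, ih]

theorem t_cross (hab : C.P a b) {k j k' j' : ℕ} (h : j * 2^k' ≤ j' * 2^k) :
    C.R (C.t a b k' j') (C.t a b k j) := by
  have h1 : C.t a b (k + k') (j * 2^k') = C.t a b k j := C.t_pow k j k'
  have h2 : C.t a b (k' + k) (j' * 2^k) = C.t a b k' j' := C.t_pow k' j' k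
  rw [add_comm k' k] at h2
  rw [← h1, ← h2]
  exact C.t_mono hab (k + k') h

end ContTotalPreorder

namespace ContTotalPreorder

variable {X : Type*} [TopologicalSpace X] (C : ContTotalPreorder X)

/-- the dyadic value set of `x` relative to the chain for pair `(a,b)` -/
def gset (a b x : X) : Set ℝ :=
  insert 0 {q : ℝ | ∃ k j : ℕ, j ≤ 2^k ∧ q = (j : ℝ) / 2^k ∧ C.P x (C.t a b k j)}

/-- the pair utility -/
noncomputable def g (a b x : X) : ℝ := sSup (C.gset a b x)

variable {a b : X}

theorem gset_nonempty (x : X) : (C.gset a b x).Nonempty := ⟨0, Or.inl rfl⟩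

theorem gset_le_one (x : X) : ∀ q ∈ C.gset a b x, q ≤ 1 := by
  rintro q (rfl | ⟨k, j, hj, rfl, _⟩)
  · norm_num
  · rw [div_le_one (by positivity)]
    exact_mod_cast Nat.cast_le.mpr hj |>.trans_eq (by push_cast; ring)

theorem gset_bddAbove (x : X) : BddAbove (C.gset a b x) := ⟨1, C.gset_le_one x⟩

theorem g_nonneg (x : X) : 0 ≤ C.g a b x :=
  le_csSup (C.gset_bddAbove x) (Or.inl rfl)

theorem g_le_one (x : X) : C.g a b x ≤ 1 :=
  csSup_le (C.gset_nonempty x) (C.gset_le_one x)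

theorem g_ge (x : X) {k j : ℕ} (hj : j ≤ 2^k) (hP : C.P x (C.t a b k j)) :
    (j : ℝ) / 2^k ≤ C.g a b x :=
  le_csSup (C.gset_bddAbove x) (Or.inr ⟨k, j, hj, rfl, hP⟩)

theorem g_mono {x y : X} (h : C.R x y) : C.g a b y ≤ C.g a b x := by
  apply csSup_le_csSup (C.gset_bddAbove x) (C.gset_nonempty y)
  rintro q (rfl | ⟨k, j, hj, rfl, hP⟩)
  · exact Or.inl rfl
  · exact Or.inr ⟨k, j, hj, rfl, C.p_trans_rl h hP⟩

theorem g_bot (hab : C.P a b) {x : X} (h : C.R b x) : C.g a b x = 0 := by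
  have : C.gset a b x = {0} := by
    apply Set.eq_singleton_iff_unique_mem.2
    refine ⟨Or.inl rfl, ?_⟩
    rintro q (rfl | ⟨k, j, hj, rfl, hP⟩)
    · rfl
    · exact absurd (C.trans _ _ _ (C.t_ge_bot hab k j) h) hP
  rw [g, this, csSup_singleton]

theorem g_top (hab : C.P a b) {x : X} (h : C.R x a) : C.g a b x = 1 := by
  refine le_antisymm (C.g_le_one x) ?_
  by_contra hlt
  push_neg at hlt
  have hg : (0:ℝ) < 1 - C.g a b x := by linarith
  obtain ⟨k, hk⟩ : ∃ k : ℕ, (1:ℝ)/2^k < 1 - C.g a b x := by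
    obtain ⟨k, hk⟩ := pow_unbounded_of_one_lt (1 / (1 - C.g a b x)) (by norm_num : (1:ℝ) < 2)
    refine ⟨k, ?_⟩
    have h2 : (0:ℝ) < 2^k := by positivity
    rw [div_lt_iff₀ h2]
    rw [div_lt_iff₀ hg] at hk
    nlinarith
  have hj : 2^k - 1 ≤ 2^k := Nat.sub_le _ _
  have hP : C.P x (C.t a b k (2^k - 1)) :=
    C.p_trans_rl h (C.t_strict_top hab k (by have := Nat.one_le_two_pow (n := k); omega))
  have := C.g_ge x hj hP
  have hcast : ((2^k - 1 : ℕ) : ℝ) = 2^k - 1 := by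
    have := Nat.one_le_two_pow (n := k)
    push_cast [Nat.cast_sub this]
    ring
  rw [hcast] at this
  have h2 : (0:ℝ) < 2^k := by positivity
  rw [sub_div, div_self (ne_of_gt h2)] at this
  linarith

end ContTotalPreorder

namespace ContTotalPreorder

variable {X : Type*} [TopologicalSpace X] (C : ContTotalPreorder X)
variable {a b : X}

/-- "left-full": a strict adjacent pair stays strict along refinements just below. -/
theorem t_leftfull (hab : C.P a b) {k i : ℕ}
    (h : C.P (C.t a b k (i+1)) (C.t a b k i)) (m : ℕ) :
    C.P (C.t a b k (i+1)) (C.t a b (k+m) ((i+1) * 2^m - 1)) ∧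
    C.P (C.t a b (k+m) ((i+1) * 2^m)) (C.t a b (k+m) ((i+1) * 2^m - 1)) := by
  induction m with
  | zero =>
      have e1 : (i+1) * 2^0 - 1 = i := by omega
      have e2 : (i+1) * 2^0 = i+1 := by omega
      rw [Nat.add_zero, e1, e2]
      exact ⟨h, h⟩
  | succ m ih =>
      obtain ⟨ih1, ih2⟩ := ih
      set K := k + m
      set I := (i+1) * 2^m with hI
      have hI1 : 1 ≤ I := by
        have := Nat.mul_pos (show 0 < i+1 by omega) (Nat.two_pow_pos m)
        omega
      have e0 : (i+1) * 2^(m+1) = 2 * I := by rw [hI]; ring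
      have e1 : (i+1) * 2^(m+1) - 1 = 2*(I-1)+1 := by omega
      have eK : k + (m+1) = K + 1 := by omega
      have emid : C.t a b (K+1) (2*(I-1)+1) = C.mid (C.t a b K I) (C.t a b K (I-1)) := by
        rw [C.t_succ_odd]
        congr 2
        omega
      have htop : C.t a b (K+1) (2*I) = C.t a b K I := C.t_succ_even K I
      constructor
      · rw [eK, e1, emid]
        have hIeq : C.t a b K I = C.t a b k (i+1) := by
          have := C.t_pow (a := a) (b := b) k (i+1) m
          rw [← hI] at this
          exact this
        rw [← hIeq]
        exact C.mid_upper ih2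
      · rw [eK, e1, e0, htop, emid]
        exact C.mid_upper ih2

/-- Claim L : a strict adjacent pair forces `g` of the top to be at least its dyadic value. -/
theorem g_strict_pair (hab : C.P a b) {k i : ℕ} (hi : i + 1 ≤ 2^k)
    (h : C.P (C.t a b k (i+1)) (C.t a b k i)) :
    ((i:ℝ)+1) / 2^k ≤ C.g a b (C.t a b k (i+1)) := by
  by_contra hlt
  push_neg at hlt
  set x := C.t a b k (i+1) with hx
  have hg0 : 0 ≤ C.g a b x := C.g_nonneg x
  have hgap : (0:ℝ) < ((i:ℝ)+1) / 2^k - C.g a b x := by linarith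
  obtain ⟨m, hm⟩ : ∃ m : ℕ, (1:ℝ)/2^(k+m) < ((i:ℝ)+1) / 2^k - C.g a b x := by
    obtain ⟨m, hm⟩ := pow_unbounded_of_one_lt (1 / (((i:ℝ)+1) / 2^k - C.g a b x))
      (by norm_num : (1:ℝ) < 2)
    refine ⟨m, ?_⟩
    have h2 : (0:ℝ) < 2^(k+m) := by positivity
    rw [div_lt_iff₀ h2]
    rw [div_lt_iff₀ hgap] at hm
    have h2m : (2:ℝ)^m ≤ 2^(k+m) := by
      apply pow_le_pow_right₀ (by norm_num)
      omega
    nlinarith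
  have hP := (C.t_leftfull hab h m).1
  have hjle : (i+1) * 2^m - 1 ≤ 2^(k+m) := by
    have : (i+1) * 2^m ≤ 2^k * 2^m := Nat.mul_le_mul_right _ hi
    rw [← pow_add] at this
    omega
  have hge := C.g_ge (a := a) (b := b) x hjle hP
  have h1I : 1 ≤ (i+1) * 2^m := by
    have := Nat.mul_pos (show 0 < i+1 by omega) (Nat.two_pow_pos m)
    omega
  have hcast : (((i+1) * 2^m - 1 : ℕ) : ℝ) = ((i:ℝ)+1) * 2^m - 1 := by
    push_cast [Nat.cast_sub h1I]
    ring
  rw [hcast] at hge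
  have h2k : (0:ℝ) < 2^k := by positivity
  have h2m : (0:ℝ) < 2^m := by positivity
  have heq : (((i:ℝ)+1) * 2^m - 1) / 2^(k+m) = ((i:ℝ)+1)/2^k - 1/2^(k+m) := by
    rw [pow_add]
    field_simp
  rw [heq] at hge
  linarith

/-- Lemma M : two consecutive indifferent chain elements yield a jump just above. -/
theorem consec_indiff_jump (hab : C.P a b) :
    ∀ k i, i + 1 ≤ 2^k → C.R (C.t a b k i) (C.t a b k (i+1)) →
    ∃ T B, C.Jump T B ∧ C.R B (C.t a b k i) ∧ C.R (C.t a b k i) B := by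
  intro k
  induction k with
  | zero =>
      intro i hi hR
      have : i = 0 := by omega
      subst this
      exfalso
      apply hab
      have e0 : C.t a b 0 0 = b := C.t_zero 0
      have e1 : C.t a b 0 1 = a := C.t_top 0 (by norm_num)
      rw [e0, e1] at hR
      exact hR
  | succ k ih =>
      intro i hi hR
      rcases Nat.even_or_odd i with ⟨m, hm⟩ | ⟨m, hm⟩
      · -- i = 2m
        have hm' : i = 2*m := by omega
        subst hm'
        have e1 : 2*m+1 = 2*m+1 := rfl
        rw [C.t_succ_even] at hR ⊢
        rw [show (2*m+1) = 2*m+1 from rfl, C.t_succ_odd] at hR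
        by_cases hP : C.P (C.t a b k (m+1)) (C.t a b k m)
        · by_cases hex : ∃ z, C.P (C.t a b k (m+1)) z ∧ C.P z (C.t a b k m)
          · exact absurd hR (C.mid_spec_strict hex).2
          · refine ⟨C.t a b k (m+1), C.t a b k m, ⟨hP, ?_⟩, C.refl _, C.refl _⟩
            intro z hz
            exact hex ⟨z, hz⟩
        · have hm1 : m + 1 ≤ 2^k := by
            rw [pow_succ] at hi; omega
          exact ih m hm1 (not_not.mp hP)
      · -- i = 2m+1
        have hm' : i = 2*m+1 := by omega
        subst hm'
        have e2 : 2*m+1+1 = 2*(m+1) := by omega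
        rw [C.t_succ_odd] at hR ⊢
        rw [e2, C.t_succ_even] at hR
        by_cases hP : C.P (C.t a b k (m+1)) (C.t a b k m)
        · by_cases hex : ∃ z, C.P (C.t a b k (m+1)) z ∧ C.P z (C.t a b k m)
          · exact absurd hR (C.mid_spec_strict hex).1
          · rw [C.mid_eq_of_not hex] at hR
            exact absurd hR hP
        · have hm1 : m + 1 ≤ 2^k := by
            rw [pow_succ] at hi; omega
          rw [C.mid_eq_of_not_p hP]
          exact ih m hm1 (not_not.mp hP)

end ContTotalPreorder

namespace ContTotalPreorder

variable {X : Type*} [TopologicalSpace X] (C : ContTotalPreorder X)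
variable {a b : X}

theorem g_lsc (c : ℝ) : IsOpen {x | c < C.g a b x} := by
  rw [isOpen_iff_mem_nhds]
  intro x hx
  obtain ⟨q, hq, hcq⟩ := exists_lt_of_lt_csSup (C.gset_nonempty (a := a) (b := b) x) hx
  rcases hq with rfl | ⟨k, j, hj, rfl, hP⟩
  · refine Filter.mem_of_superset Filter.univ_mem ?_
    intro z _
    exact lt_of_lt_of_le hcq (C.g_nonneg z)
  · refine Filter.mem_of_superset ((C.open_p_left (C.t a b k j)).mem_nhds hP) ?_
    intro z hz
    exact lt_of_lt_of_le hcq (C.g_ge z hj hz)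

theorem exists_dyadic_between {r c : ℝ} (h0 : 0 ≤ r) (hrc : r < c) (hc : c ≤ 1) :
    ∃ k j : ℕ, j ≤ 2^k ∧ r < (j:ℝ)/2^k ∧ (j:ℝ)/2^k < c := by
  have hgap : 0 < c - r := by linarith
  obtain ⟨k, hk⟩ : ∃ k : ℕ, (1:ℝ)/2^k < c - r := by
    obtain ⟨k, hk⟩ := pow_unbounded_of_one_lt (1 / (c - r)) (by norm_num : (1:ℝ) < 2)
    refine ⟨k, ?_⟩
    have h2 : (0:ℝ) < 2^k := by positivity
    rw [div_lt_iff₀ h2]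
    rw [div_lt_iff₀ hgap] at hk
    nlinarith
  have h2k : (0:ℝ) < 2^k := by positivity
  have hk2 : (1:ℝ) < (c - r) * 2^k := (div_lt_iff₀ h2k).mp hk
  refine ⟨k, Nat.floor (r * 2^k) + 1, ?_, ?_, ?_⟩
  · -- j ≤ 2^k
    have hfl : (Nat.floor (r * 2^k) : ℝ) ≤ r * 2^k := Nat.floor_le (by positivity)
    have hj : ((Nat.floor (r * 2^k) + 1 : ℕ) : ℝ) < c * 2^k := by
      push_cast
      nlinarith
    have hj2 : ((Nat.floor (r * 2^k) + 1 : ℕ) : ℝ) < 2^k := by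
      nlinarith
    exact_mod_cast hj2.le
  · rw [lt_div_iff₀ h2k]
    push_cast
    exact Nat.lt_floor_add_one _
  · rw [div_lt_iff₀ h2k]
    have hfl : (Nat.floor (r * 2^k) : ℝ) ≤ r * 2^k := Nat.floor_le (by positivity)
    push_cast
    nlinarith

theorem g_usc (hab : C.P a b) (c : ℝ) : IsOpen {x | C.g a b x < c} := by
  rw [isOpen_iff_mem_nhds]
  intro x hx
  simp only [Set.mem_setOf_eq] at hx
  by_cases hc1 : 1 < c
  · refine Filter.mem_of_superset Filter.univ_mem ?_
    intro z _
    exact lt_of_le_of_lt (C.g_le_one z) hc1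
  push_neg at hc1
  -- find a dyadic strictly between g x and c
  have hg0 : 0 ≤ C.g a b x := C.g_nonneg x
  obtain ⟨k, j, hjle, hxj, hjc⟩ := exists_dyadic_between hg0 hx hc1
  have h2k : (0:ℝ) < 2^k := by positivity
  have hR : C.R (C.t a b k j) x := by
    by_contra hP
    exact absurd (C.g_ge x hjle hP) (not_le.mpr hxj)
  by_cases hPx : C.P (C.t a b k j) x
  · -- Case 1 : x strictly below t k j
    refine Filter.mem_of_superset ((C.open_p_right (C.t a b k j)).mem_nhds hPx) ?_
    intro z hz
    simp only [Set.mem_setOf_eq] at hz ⊢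
    have : C.g a b z ≤ (j:ℝ)/2^k := by
      apply csSup_le (C.gset_nonempty z)
      rintro q (rfl | ⟨k', j', hj', rfl, hP'⟩)
      · positivity
      · by_contra hgt
        push_neg at hgt
        have hcross : j * 2^k' ≤ j' * 2^k := by
          have h2k' : (0:ℝ) < 2^k' := by positivity
          rw [div_lt_div_iff₀ h2k h2k'] at hgt
          have : (j * 2^k' : ℝ) < (j' * 2^k : ℝ) := by push_cast; linarith
          exact_mod_cast this.le
        have hRt : C.R (C.t a b k' j') (C.t a b k j) := C.t_cross hab hcross
        have : C.P (C.t a b k' j') z := C.p_trans_rl hRt hz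
        exact (C.p_asymm this) hP'
    linarith
  · -- Case 2 : x ~ t k j
    have hRx : C.R x (C.t a b k j) := not_not.mp hPx
    have hj1 : 1 ≤ j := by
      rcases Nat.eq_zero_or_pos j with rfl | h
      · norm_num at hxj; linarith
      · omega
    by_cases hPj : C.P (C.t a b k j) (C.t a b k (j-1))
    · exfalso
      have hj' : (j-1) + 1 = j := by omega
      have hge := C.g_strict_pair hab (k := k) (i := j-1)
        (le_trans (by omega : j - 1 + 1 ≤ j) hjle) (by rw [hj']; exact hPj)
      rw [hj'] at hge
      have hcast : ((j-1:ℕ):ℝ) + 1 = (j:ℝ) := by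
        push_cast [Nat.cast_sub hj1]; ring
      rw [hcast] at hge
      have : C.g a b (C.t a b k j) ≤ C.g a b x := C.g_mono hRx
      linarith
    · have hRj : C.R (C.t a b k (j-1)) (C.t a b k j) := not_not.mp hPj
      have hj' : (j-1) + 1 = j := by omega
      obtain ⟨T, B, hJ, hB1, hB2⟩ :=
        C.consec_indiff_jump hab k (j-1) (le_trans (by omega : j - 1 + 1 ≤ j) hjle)
          (by rw [hj']; exact hRj)
      -- open set : complement of {z | P z B} which is clopen
      have hclopen := C.jump_clopen hJ
      have hUopen : IsOpen {z | C.R B z} := by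
        have : {z | C.R B z} = {z | C.P z B}ᶜ := by
          ext z
          simp only [Set.mem_compl_iff, Set.mem_setOf_eq, P, not_not]
        rw [this]
        exact hclopen.isOpen_compl
      have hxU : C.R B x := C.trans _ _ _ (C.trans _ _ _ hB1 hRj) hR
      have hxB : C.R x B := C.trans _ _ _ (C.trans _ _ _ hRx (C.t_mono hab k (by omega : j - 1 ≤ j))) hB2
      refine Filter.mem_of_superset (hUopen.mem_nhds hxU) ?_
      intro z hz
      simp only [Set.mem_setOf_eq] at hz ⊢
      have : C.g a b z ≤ C.g a b B := C.g_mono hz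
      have h2 : C.g a b B ≤ C.g a b x := C.g_mono hxB
      linarith

theorem g_continuous (hab : C.P a b) : Continuous (C.g a b) := by
  rw [continuous_iff_lower_upperSemicontinuous]
  constructor
  · intro x y hy
    exact (C.g_lsc (a := a) (b := b) y).mem_nhds hy
  · intro x y hy
    exact (C.g_usc hab y).mem_nhds hy

end ContTotalPreorder

namespace ContTotalPreorder

variable {X : Type*} [TopologicalSpace X]

theorem jump_cover [SecondCountableTopology X] (C : ContTotalPreorder X) :
    ∃ J : Set X, J.Countable ∧ ∀ T B : X, C.Jump T B →
      (∃ e ∈ J, C.R e T ∧ C.R T e) ∧ (∃ e ∈ J, C.R e B ∧ C.R B e) := by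
  classical
  obtain ⟨Bs, hBc, -, hBbasis⟩ := TopologicalSpace.exists_countable_basis X
  set S : Set (Set X) :=
    {s | s ∈ Bs ∧ ∃ q : X × X, C.Jump q.1 q.2 ∧ q.1 ∈ s ∧ s ⊆ {z | C.R z q.1}} with hS
  have hSc : S.Countable := hBc.mono fun s hs => hs.1
  set f : Set X → Set X := fun s =>
    if hs : s ∈ S then {hs.2.choose.1, hs.2.choose.2} else ∅ with hf
  refine ⟨⋃ s ∈ S, f s, hSc.biUnion fun s _ => ?_, ?_⟩
  · by_cases hs : s ∈ S
    · simp only [hf, dif_pos hs]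
      exact (Set.countable_singleton _).insert _
    · simp only [hf, dif_neg hs]
      exact Set.countable_empty
  · intro T B hJ
    have hopen : IsOpen {z | C.R z T} := by
      rw [← C.jump_eq hJ]; exact C.open_p_left B
    obtain ⟨s, hsB, hTs, hsub⟩ :=
      hBbasis.exists_subset_of_mem_open (show T ∈ {z | C.R z T} from C.refl T) hopen
    have hsS : s ∈ S := ⟨hsB, ⟨(T, B), hJ, hTs, hsub⟩⟩
    obtain ⟨hq1, hq2, hq3⟩ := hsS.2.choose_spec
    set q := hsS.2.choose with hqdef
    have hmem1 : q.1 ∈ f s := by rw [hf]; simp only [dif_pos hsS]; left; rfl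
    have hmem2 : q.2 ∈ f s := by rw [hf]; simp only [dif_pos hsS]; right; rfl
    have hq1T : C.R q.1 T := hsub hq2
    have hTq1 : C.R T q.1 := hq3 hTs
    constructor
    · exact ⟨q.1, Set.mem_biUnion hsS hmem1, hq1T, hTq1⟩
    · refine ⟨q.2, Set.mem_biUnion hsS hmem2, ?_, ?_⟩
      · -- R q.2 B
        by_contra hn
        have hPB : C.P B q.2 := hn
        have hPq1B : C.P q.1 B := C.p_trans_rl hq1T hJ.1
        exact hq1.2 B ⟨hPq1B, hPB⟩
      · -- R B q.2
        by_contra hn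
        have hPB : C.P q.2 B := hn
        have hPT : C.P T q.2 := C.p_trans_rl hTq1 hq1.1
        exact hJ.2 q.2 ⟨hPT, hPB⟩

theorem exists_order_dense [SecondCountableTopology X]
    (C : ContTotalPreorder X) :
    ∃ E : Set X, E.Countable ∧
      (∀ x y : X, C.P x y → ∃ e ∈ E, C.R x e ∧ C.P e y) ∧
      (∀ x y : X, C.P x y → ∃ e ∈ E, C.P x e ∧ C.R e y) := by
  obtain ⟨D, hDc, hDd⟩ := TopologicalSpace.exists_countable_dense X
  obtain ⟨J, hJc, hJcov⟩ := C.jump_cover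
  refine ⟨D ∪ J, hDc.union hJc, ?_, ?_⟩
  · intro x y hP
    by_cases hex : ∃ z, C.P x z ∧ C.P z y
    · have hO : IsOpen ({z | C.P x z} ∩ {z | C.P z y}) :=
        (C.open_p_right x).inter (C.open_p_left y)
      obtain ⟨d, hdD, hdO⟩ := hDd.exists_mem_open hO (by exact hex)
      exact ⟨d, Or.inl hdD, C.r_of_p hdO.1, hdO.2⟩
    · obtain ⟨⟨e, heJ, he1, he2⟩, -⟩ := hJcov x y ⟨hP, fun z hz => hex ⟨z, hz⟩⟩
      exact ⟨e, Or.inr heJ, he2, C.p_trans_rl he1 hP⟩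
  · intro x y hP
    by_cases hex : ∃ z, C.P x z ∧ C.P z y
    · have hO : IsOpen ({z | C.P x z} ∩ {z | C.P z y}) :=
        (C.open_p_right x).inter (C.open_p_left y)
      obtain ⟨d, hdD, hdO⟩ := hDd.exists_mem_open hO (by exact hex)
      exact ⟨d, Or.inl hdD, hdO.1, C.r_of_p hdO.2⟩
    · obtain ⟨-, ⟨e, heJ, he1, he2⟩⟩ := hJcov x y ⟨hP, fun z hz => hex ⟨z, hz⟩⟩
      exact ⟨e, Or.inr heJ, C.p_trans_lr hP he2, he1⟩

/-- Debreu-style utility representation. -/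
theorem exists_utility [SecondCountableTopology X]
    (C : ContTotalPreorder X) :
    ∃ u : X → ℝ, Continuous u ∧ ∀ x y : X, (C.R x y ↔ u y ≤ u x) := by
  classical
  by_cases htriv : ∀ x y : X, C.R x y
  · exact ⟨fun _ => 0, continuous_const, fun x y => by simp [htriv x y]⟩
  push_neg at htriv
  obtain ⟨x₀, y₀, hxy₀⟩ := htriv
  have hP₀ : C.P y₀ x₀ := hxy₀
  obtain ⟨E, hEc, hdA, hdA'⟩ := C.exists_order_dense
  set Pairs : Set (X × X) := {q | q.1 ∈ E ∧ q.2 ∈ E ∧ C.P q.1 q.2} with hPairs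
  have hPc : Pairs.Countable :=
    (hEc.prod hEc).mono (fun q hq => Set.mem_prod.2 ⟨hq.1, hq.2.1⟩)
  have hPne : Pairs.Nonempty := by
    obtain ⟨e, heE, he1, he2⟩ := hdA _ _ hP₀
    obtain ⟨e', he'E, he'1, he'2⟩ := hdA' _ _ he2
    exact ⟨(e, e'), heE, he'E, he'1⟩
  obtain ⟨fp, hfp⟩ := Set.Countable.exists_eq_range hPc hPne
  have hfpP : ∀ n, C.P (fp n).1 (fp n).2 := by
    intro n
    have : fp n ∈ Pairs := by rw [hfp]; exact Set.mem_range_self n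
    exact this.2.2
  set u : X → ℝ := fun x => ∑' n : ℕ, (1/2)^n * C.g (fp n).1 (fp n).2 x with hu
  have hsummable : ∀ x, Summable (fun n : ℕ => (1/2:ℝ)^n * C.g (fp n).1 (fp n).2 x) := by
    intro x
    apply Summable.of_nonneg_of_le
      (fun n => mul_nonneg (by positivity) (C.g_nonneg x))
      (fun n => ?_) (summable_geometric_two)
    have h1 := C.g_le_one (a := (fp n).1) (b := (fp n).2) x
    have h2 : (0:ℝ) < (1/2)^n := by positivity
    calc (1/2:ℝ)^n * C.g (fp n).1 (fp n).2 x ≤ (1/2)^n * 1 := by nlinarith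
    _ = (1/2)^n := by ring
  have humono : ∀ {x y : X}, C.R x y → u y ≤ u x := by
    intro x y h
    apply Summable.tsum_le_tsum _ (hsummable y) (hsummable x)
    intro n
    have := C.g_mono (a := (fp n).1) (b := (fp n).2) h
    have h2 : (0:ℝ) ≤ (1/2)^n := by positivity
    nlinarith
  have hustrict : ∀ {x y : X}, C.P x y → u y < u x := by
    intro x y h
    obtain ⟨e, heE, he1, he2⟩ := hdA _ _ h
    obtain ⟨e', he'E, he'1, he'2⟩ := hdA' _ _ he2
    have : (e, e') ∈ Pairs := ⟨heE, he'E, he'1⟩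
    rw [hfp] at this
    obtain ⟨n, hn⟩ := this
    have key := Summable.tsum_lt_tsum_of_nonneg (i := n)
      (f := fun m => (1/2:ℝ)^m * C.g (fp m).1 (fp m).2 y)
      (g := fun m => (1/2:ℝ)^m * C.g (fp m).1 (fp m).2 x)
      (fun m => mul_nonneg (by positivity) (C.g_nonneg y)) ?_ ?_ (hsummable x)
    · exact key
    · intro m
      have := C.g_mono (a := (fp m).1) (b := (fp m).2) (C.r_of_p h)
      have h2 : (0:ℝ) ≤ (1/2)^m := by positivity
      nlinarith
    · have hy0 : C.g (fp n).1 (fp n).2 y = 0 := by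
        rw [hn]
        exact C.g_bot he'1 he'2
      have hx1 : C.g (fp n).1 (fp n).2 x = 1 := by
        rw [hn]
        exact C.g_top he'1 he1
      show (1/2:ℝ)^n * C.g (fp n).1 (fp n).2 y < (1/2:ℝ)^n * C.g (fp n).1 (fp n).2 x
      rw [hy0, hx1]
      simp only [mul_zero, mul_one]
      positivity
  refine ⟨u, ?_, ?_⟩
  · apply continuous_tsum (fun n => ?_) summable_geometric_two (fun n x => ?_)
    · exact continuous_const.mul (C.g_continuous (hfpP n))
    · rw [Real.norm_eq_abs, abs_mul, abs_of_nonneg (by positivity : (0:ℝ) ≤ (1/2)^n),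
        abs_of_nonneg (C.g_nonneg x)]
      have h1 := C.g_le_one (a := (fp n).1) (b := (fp n).2) x
      have h2 : (0:ℝ) < (1/2)^n := by positivity
      calc (1/2:ℝ)^n * C.g (fp n).1 (fp n).2 x ≤ (1/2)^n * 1 := by nlinarith
      _ = (1/2)^n := by ring
  · intro x y
    constructor
    · exact humono
    · intro hle
      by_contra hn
      exact absurd hle (not_le.mpr (hustrict hn))

end ContTotalPreorder

section Luce

variable {X : Type*} (p : Finset X → X → ℝ)

theorem luce_single (hsum : ∀ A : Finset X, A.Nonempty → ∑ a ∈ A, p A a = 1) (a : X) :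
    p {a} a = 1 := by
  have := hsum {a} ⟨a, Finset.mem_singleton_self a⟩
  simpa using this

theorem luce_refl (hsum : ∀ A : Finset X, A.Nonempty → ∑ a ∈ A, p A a = 1) (a : X) :
    0 < p {a, a} a := by
  have h : ({a, a} : Finset X) = {a} := by simp
  rw [h, luce_single p hsum a]
  norm_num

theorem luce_pair_sum (hsum : ∀ A : Finset X, A.Nonempty → ∑ a ∈ A, p A a = 1)
    {a b : X} (hab : a ≠ b) : p {a, b} a + p {a, b} b = 1 := by
  have := hsum {a, b} ⟨a, by simp⟩
  rwa [Finset.sum_pair hab] at this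

theorem luce_total (hpos : ∀ A a, 0 ≤ p A a)
    (hsum : ∀ A : Finset X, A.Nonempty → ∑ a ∈ A, p A a = 1) (a b : X)
    (h : ¬ 0 < p {a, b} a) : 0 < p {b, a} b := by
  by_cases hab : a = b
  · subst hab
    exact absurd (luce_refl p hsum a) h
  · have h0 : p {a, b} a = 0 := le_antisymm (not_lt.mp h) (hpos _ _)
    have := luce_pair_sum p hsum hab
    rw [Finset.pair_comm b a]
    nlinarith [hpos ({a,b} : Finset X) b]

theorem luce_trans (hpos : ∀ A a, 0 ≤ p A a)
    (hsum : ∀ A : Finset X, A.Nonempty → ∑ a ∈ A, p A a = 1)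
    (hCA : ∀ A B : Finset X, B.Nonempty → B ⊆ A → ∀ a ∈ B,
      p A a = p B a * ∑ b ∈ B, p A b)
    {x y z : X} (hxy : 0 < p {x, y} x) (hyz : 0 < p {y, z} y) :
    0 < p {x, z} x := by
  by_cases hxey : x = y
  · subst hxey; exact hyz
  by_cases hyez : y = z
  · subst hyez; exact hxy
  by_cases hxez : x = z
  · subst hxez; exact luce_refl p hsum x
  -- all distinct
  set A : Finset X := {x, y, z} with hA
  have hxA : x ∈ A := by simp [hA]
  have hyA : y ∈ A := by simp [hA]
  have hzA : z ∈ A := by simp [hA]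
  have hsumA : p A x + p A y + p A z = 1 := by
    have := hsum A ⟨x, hxA⟩
    rw [hA] at this ⊢
    rw [Finset.sum_insert (by simp [hxey, hxez]), Finset.sum_pair hyez] at this
    linarith
  by_contra hxz
  have h0 : p {x, z} x = 0 := le_antisymm (not_lt.mp hxz) (hpos _ _)
  have hsx : p A x = 0 := by
    have h1 := hCA A {x, z} ⟨x, by simp⟩ (by
      intro t ht
      simp only [Finset.mem_insert, Finset.mem_singleton] at ht
      rcases ht with rfl | rfl
      exacts [hxA, hzA]) x (by simp)
    rw [h0] at h1
    simpa using h1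
  have hsy : p A y = 0 := by
    have h1 := hCA A {x, y} ⟨x, by simp⟩ (by
      intro t ht
      simp only [Finset.mem_insert, Finset.mem_singleton] at ht
      rcases ht with rfl | rfl
      exacts [hxA, hyA]) y (by simp)
    rw [Finset.sum_pair hxey, hsx] at h1
    have hle : p {x, y} y < 1 := by
      have := luce_pair_sum p hsum hxey
      linarith
    have hge : 0 ≤ p A y := hpos _ _
    nlinarith
  have hsz : p A z = 1 := by linarith
  have h1 := hCA A {y, z} ⟨y, by simp⟩ (by
    intro t ht
    simp only [Finset.mem_insert, Finset.mem_singleton] at ht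
    rcases ht with rfl | rfl
    exacts [hyA, hzA]) y (by simp)
  rw [Finset.sum_pair hyez, hsy, hsz] at h1
  norm_num at h1
  linarith

theorem luce_supp (hpos : ∀ A a, 0 ≤ p A a)
    (hsum : ∀ A : Finset X, A.Nonempty → ∑ a ∈ A, p A a = 1)
    (hCA : ∀ A B : Finset X, B.Nonempty → B ⊆ A → ∀ a ∈ B,
      p A a = p B a * ∑ b ∈ B, p A b)
    {A : Finset X} (hA : A.Nonempty) {a : X} (haA : a ∈ A) :
    0 < p A a ↔ ∀ b ∈ A, 0 < p {a, b} a := by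
  constructor
  · intro hpa b hbA
    by_cases hab : a = b
    · subst hab; exact luce_refl p hsum a
    · have h1 := hCA A {a, b} ⟨a, by simp⟩ (by
        intro t ht
        simp only [Finset.mem_insert, Finset.mem_singleton] at ht
        rcases ht with rfl | rfl
        exacts [haA, hbA]) a (by simp)
      rw [Finset.sum_pair hab] at h1
      rcases lt_or_eq_of_le (hpos {a, b} a) with h | h
      · exact h
      · rw [← h] at h1
        simp at h1
        rw [h1] at hpa
        exact absurd hpa (lt_irrefl 0)
  · intro hall
    obtain ⟨b, hbA, hpb⟩ : ∃ b ∈ A, 0 < p A b := by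
      by_contra hno
      push_neg at hno
      have : ∑ b ∈ A, p A b = 0 := by
        apply Finset.sum_eq_zero
        intro b hb
        exact le_antisymm (hno b hb) (hpos _ _)
      rw [hsum A hA] at this
      norm_num at this
    by_cases hab : a = b
    · subst hab; exact hpb
    rcases lt_or_eq_of_le (hpos A a) with h | h
    · exact h
    · exfalso
      have h1 := hCA A {a, b} ⟨a, by simp⟩ (by
        intro t ht
        simp only [Finset.mem_insert, Finset.mem_singleton] at ht
        rcases ht with rfl | rfl
        exacts [haA, hbA]) b (by simp)
      rw [Finset.sum_pair hab, ← h] at h1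
      simp only [zero_add] at h1
      have hb1 : p {a, b} b = 1 :=
        mul_right_cancel₀ (ne_of_gt hpb) (by linarith : p {a, b} b * p A b = 1 * p A b)
      have := luce_pair_sum p hsum hab
      have ha0 : p {a, b} a = 0 := by linarith
      have := hall b hbA
      rw [ha0] at this
      exact lt_irrefl 0 this

end Luce

/-- Under the Choice Axiom on a separable metric space, `p` satisfies Continuity iff
there is a continuous `u : X → ℝ` with `supp p_A = argmax_{a∈A} u(a)` for all `A`. -/
theorem continuity_iff_continuous_utility
    {X : Type*} [MetricSpace X] [TopologicalSpace.SeparableSpace X]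
    (p : Finset X → X → ℝ)
    (hpos : ∀ A a, 0 ≤ p A a)
    (hout : ∀ A a, a ∉ A → p A a = 0)
    (hsum : ∀ A : Finset X, A.Nonempty → ∑ a ∈ A, p A a = 1)
    (hCA : ∀ A B : Finset X, B.Nonempty → B ⊆ A → ∀ a ∈ B,
      p A a = p B a * ∑ b ∈ B, p A b) :
    ((∀ (x y : X) (xs : ℕ → X), Filter.Tendsto xs Filter.atTop (nhds x) →
        ((∀ n, 0 < p {xs n, y} (xs n)) → 0 < p {x, y} x) ∧
        ((∀ n, 0 < p {y, xs n} y) → 0 < p {y, x} y)) ↔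
      (∃ u : X → ℝ, Continuous u ∧
        ∀ A : Finset X, A.Nonempty →
          A.filter (fun a => 0 < p A a) = A.filter (fun a => ∀ b ∈ A, u b ≤ u a))) := by
  haveI : SecondCountableTopology X := UniformSpace.secondCountable_of_separable X
  constructor
  · -- Continuity → utility
    intro hcont
    set C : ContTotalPreorder X :=
      { R := fun x y => 0 < p {x, y} x
        total := fun x y => by
          by_cases h : 0 < p {x, y} x
          · exact Or.inl h
          · exact Or.inr (luce_total p hpos hsum x y h)
        trans := fun x y z hxy hyz => luce_trans p hpos hsum hCA hxy hyz
        closed_lower := fun y => by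
          apply IsSeqClosed.isClosed
          intro xs x hmem hx
          exact (hcont x y xs hx).1 hmem
        closed_upper := fun y => by
          apply IsSeqClosed.isClosed
          intro xs x hmem hx
          exact (hcont x y xs hx).2 hmem } with hC
    obtain ⟨u, hu_cont, hu_rep⟩ := C.exists_utility
    refine ⟨u, hu_cont, ?_⟩
    intro A hA
    ext a
    simp only [Finset.mem_filter]
    constructor
    · rintro ⟨haA, hpa⟩
      refine ⟨haA, fun b hbA => ?_⟩
      have := (luce_supp p hpos hsum hCA hA haA).mp hpa b hbA
      exact (hu_rep a b).mp this
    · rintro ⟨haA, hmax⟩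
      refine ⟨haA, ?_⟩
      apply (luce_supp p hpos hsum hCA hA haA).mpr
      intro b hbA
      exact (hu_rep a b).mpr (hmax b hbA)
  · -- utility → Continuity
    rintro ⟨u, hu_cont, hu_supp⟩
    have key : ∀ z w : X, 0 < p {z, w} z ↔ u w ≤ u z := by
      intro z w
      have h1 := hu_supp {z, w} ⟨z, by simp⟩
      have h2 := Finset.ext_iff.mp h1 z
      simp only [Finset.mem_filter, Finset.mem_insert, Finset.mem_singleton] at h2
      constructor
      · intro hp
        have := (h2.mp ⟨Or.inl trivial, hp⟩).2
        exact this w (Or.inr rfl)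
      · intro hle
        refine (h2.mpr ⟨Or.inl trivial, ?_⟩).2
        rintro b (rfl | rfl)
        · exact le_refl _
        · exact hle
    intro x y xs hx
    have htend : Filter.Tendsto (fun n => u (xs n)) Filter.atTop (nhds (u x)) :=
      (hu_cont.tendsto x).comp hx
    constructor
    · intro hn
      rw [key]
      exact ge_of_tendsto htend (Filter.Eventually.of_forall fun n => (key _ _).mp (hn n))
    · intro hn
      rw [key]
      exact le_of_tendsto htend (Filter.Eventually.of_forall fun n => (key _ _).mp (hn n))
end

section
/- Luce's theorem: a random choice rule p satisfies Positivity (p(a,{a,b}) > 0 for all a,b) and the Choice Axiom if and only if there exists α : X → ℝ such that p(a,A) = e^{α(a)}/Σ_{b∈A} e^{α(b)} for all A ∈ 𝒜 and a ∈ A. -/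
/-- Luce's theorem: a random choice rule satisfies Positivity and the Choice Axiom
iff it has the Luce form `p(a,A) = e^{α(a)}/Σ_{b∈A} e^{α(b)}`. -/
theorem luce_theorem
    {X : Type*} [DecidableEq X] (p : Finset X → X → ℝ)
    (hpos : ∀ A a, 0 ≤ p A a)
    (hout : ∀ A a, a ∉ A → p A a = 0)
    (hsum : ∀ A : Finset X, A.Nonempty → ∑ a ∈ A, p A a = 1) :
    ((∀ a b : X, 0 < p {a, b} a) ∧
      (∀ A B : Finset X, B.Nonempty → B ⊆ A → ∀ a ∈ B,
        p A a = p B a * ∑ b ∈ B, p A b)) ↔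
    (∃ α : X → ℝ, ∀ A : Finset X, A.Nonempty → ∀ a ∈ A,
      p A a = Real.exp (α a) / ∑ b ∈ A, Real.exp (α b)) := by
  constructor
  · rintro ⟨hP, hAx⟩
    by_cases hX : Nonempty X
    · obtain ⟨a₀⟩ := hX
      -- positivity of p A a for all a ∈ A
      have hposA : ∀ A : Finset X, A.Nonempty → ∀ a ∈ A, 0 < p A a := by
        intro A hA a ha
        have hsum1 := hsum A hA
        have hc : ∃ c ∈ A, 0 < p A c := by
          by_contra h
          push_neg at h
          have h0 : ∑ a ∈ A, p A a = 0 :=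
            Finset.sum_eq_zero fun c hc => le_antisymm (h c hc) (hpos A c)
          rw [h0] at hsum1; norm_num at hsum1
        obtain ⟨c, hcA, hcpos⟩ := hc
        have hsub : ({a, c} : Finset X) ⊆ A := by
          intro x hx
          simp only [Finset.mem_insert, Finset.mem_singleton] at hx
          rcases hx with rfl | rfl <;> assumption
        have h1 := hAx A {a, c} ⟨a, by simp⟩ hsub a (by simp)
        have hS : 0 < ∑ b ∈ ({a, c} : Finset X), p A b :=
          Finset.sum_pos' (fun i _ => hpos A i) ⟨c, by simp, hcpos⟩
        rw [h1]
        exact mul_pos (hP a c) hS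
      -- the cross-ratio relation
      have hratio : ∀ A : Finset X, ∀ a ∈ A, ∀ b ∈ A,
          p A a * p {a, b} b = p A b * p {a, b} a := by
        intro A a ha b hb
        have hsub : ({a, b} : Finset X) ⊆ A := by
          intro x hx
          simp only [Finset.mem_insert, Finset.mem_singleton] at hx
          rcases hx with rfl | rfl <;> assumption
        have h1 := hAx A {a, b} ⟨a, by simp⟩ hsub a (by simp)
        have h2 := hAx A {a, b} ⟨a, by simp⟩ hsub b (by simp)
        rw [h1, h2]; ring
      -- the Luce value
      set u : X → ℝ := fun a => p {a, a₀} a / p {a, a₀} a₀ with hu_def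
      have hu : ∀ a, 0 < u a := fun a => div_pos (hP a a₀) (by rw [Finset.pair_comm]; exact hP a₀ a)
      -- key lemma
      have hkey : ∀ A : Finset X, ∀ a ∈ A, ∀ b ∈ A,
          p A a * u b = p A b * u a := by
        intro A a ha b hb
        set T : Finset X := {a, b, a₀} with hT
        have haT : a ∈ T := by simp [hT]
        have hbT : b ∈ T := by simp [hT]
        have ha0T : a₀ ∈ T := by simp [hT]
        have hT0 : 0 < p T a₀ := hposA T ⟨a₀, ha0T⟩ a₀ ha0T
        have r1 := hratio T a haT a₀ ha0T
        have r2 := hratio T b hbT a₀ ha0T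
        have r4 := hratio T a haT b hbT
        have r3 := hratio A a ha b hb
        -- star : u a * p {a,b} b = u b * p {a,b} a
        have hstar : u a * p {a, b} b = u b * p {a, b} a := by
          have hqa0 : p {a, a₀} a₀ ≠ 0 := ne_of_gt (by rw [Finset.pair_comm]; exact hP a₀ a)
          have hra0 : p {b, a₀} a₀ ≠ 0 := ne_of_gt (by rw [Finset.pair_comm]; exact hP a₀ b)
          have hmul : (p {a, a₀} a * p {a, b} b * p {b, a₀} a₀) * p T a₀
              = (p {b, a₀} b * p {a, b} a * p {a, a₀} a₀) * p T a₀ := by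
            linear_combination (-(p {a, b} b * p {b, a₀} a₀)) * r1
              + (p {a, a₀} a₀ * p {b, a₀} a₀) * r4
              + (p {a, a₀} a₀ * p {a, b} a) * r2
          have h5 := mul_right_cancel₀ (ne_of_gt hT0) hmul
          simp only [hu_def]
          rw [div_mul_eq_mul_div, div_mul_eq_mul_div, div_eq_div_iff hqa0 hra0]
          linear_combination h5
        have hpa : p {a, b} a ≠ 0 := ne_of_gt (hP a b)
        have : p A a * u b * p {a, b} a = p A b * u a * p {a, b} a := by
          linear_combination p A a * hstar.symm + u a * r3
        exact mul_right_cancel₀ hpa this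
      -- conclude
      refine ⟨fun a => Real.log (u a), ?_⟩
      intro A hA a ha
      have hSu : 0 < ∑ b ∈ A, u b :=
        Finset.sum_pos (fun b _ => hu b) hA
      have hsumkey : p A a * ∑ b ∈ A, u b = u a := by
        rw [Finset.mul_sum]
        calc ∑ b ∈ A, p A a * u b = ∑ b ∈ A, p A b * u a :=
              Finset.sum_congr rfl fun b hb => hkey A a ha b hb
          _ = (∑ b ∈ A, p A b) * u a := by rw [Finset.sum_mul]
          _ = u a := by rw [hsum A hA, one_mul]
      have : p A a = u a / ∑ b ∈ A, u b := by
        field_simp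
        linarith [hsumkey]
      rw [this]
      congr 1
      · exact (Real.exp_log (hu a)).symm
      · exact Finset.sum_congr rfl fun b _ => (Real.exp_log (hu b)).symm
    · exact ⟨fun _ => 0, fun A hA a ha => (hX ⟨a⟩).elim⟩
  · rintro ⟨α, hα⟩
    have hSpos : ∀ A : Finset X, A.Nonempty → 0 < ∑ b ∈ A, Real.exp (α b) :=
      fun A hA => Finset.sum_pos (fun b _ => Real.exp_pos _) hA
    constructor
    · intro a b
      rw [hα {a, b} ⟨a, by simp⟩ a (by simp)]
      exact div_pos (Real.exp_pos _) (hSpos _ ⟨a, by simp⟩)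
    · intro A B hB hBA a haB
      have hA : A.Nonempty := ⟨a, hBA haB⟩
      have hSA := hSpos A hA
      have hSB := hSpos B hB
      have hsB : ∑ b ∈ B, p A b = (∑ b ∈ B, Real.exp (α b)) / ∑ b ∈ A, Real.exp (α b) := by
        calc ∑ b ∈ B, p A b
            = ∑ b ∈ B, Real.exp (α b) / ∑ c ∈ A, Real.exp (α c) :=
              Finset.sum_congr rfl fun b hb => hα A hA b (hBA hb)
          _ = (∑ b ∈ B, Real.exp (α b)) / ∑ c ∈ A, Real.exp (α c) := by
              rw [Finset.sum_div]
      rw [hα A hA a (hBA haB), hα B hB a haB, hsB]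
      rw [div_mul_div_comm]
      rw [mul_comm (Real.exp (α a)) (∑ b ∈ B, Real.exp (α b))]
      rw [mul_div_mul_left _ _ (ne_of_gt hSB)]
end

section
/- A random choice rule p satisfies Luce's Choice Axiom if and only if it satisfies Odds Independence: for all A ∈ 𝒜 and all a, b ∈ A such that not both p(a,A) = 0 and p(b,A) = 0, the equality p(a,{a,b})·p(b,A) = p(b,{a,b})·p(a,A) holds together with: p(b,{a,b}) = 0 implies p(b,A) = 0, and p(b,A) = 0 together with p(a,A) > 0 implies p(b,{a,b}) = 0 (i.e., the odds p(a,{a,b})/p(b,{a,b}) and p(a,A)/p(b,A) agree as extended reals whenever either is well defined). -/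
/-- A random choice rule satisfies Luce's Choice Axiom iff it satisfies Odds
Independence: for `a, b ∈ A` with not both `p(a,A) = 0` and `p(b,A) = 0`, the odds
of `a` against `b` in `{a,b}` and in `A` agree as extended reals. -/
theorem choice_axiom_iff_odds_independence
    {X : Type*} [DecidableEq X] (p : Finset X → X → ℝ)
    (hpos : ∀ A a, 0 ≤ p A a)
    (hout : ∀ A a, a ∉ A → p A a = 0)
    (hsum : ∀ A : Finset X, A.Nonempty → ∑ a ∈ A, p A a = 1) :
    (∀ A B : Finset X, B.Nonempty → B ⊆ A → ∀ a ∈ B,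
      p A a = p B a * ∑ b ∈ B, p A b) ↔
    (∀ A : Finset X, A.Nonempty → ∀ a ∈ A, ∀ b ∈ A,
      ¬ (p A a = 0 ∧ p A b = 0) →
      (p {a, b} a * p A b = p {a, b} b * p A a ∧
        (p {a, b} b = 0 → p A b = 0) ∧
        (p A b = 0 → 0 < p A a → p {a, b} b = 0))) := by
  constructor
  · intro hca A hA a ha b hb hne
    by_cases hab : a = b
    · subst hab
      have h1 : p {a} a = 1 := by simpa using hsum {a} ⟨a, by simp⟩
      have hset : ({a, a} : Finset X) = {a} := by simp
      rw [hset]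
      refine ⟨rfl, ?_, ?_⟩
      · intro h; rw [h1] at h; norm_num at h
      · intro h hpos'; exact absurd h hpos'.ne'
    · have hBA : ({a, b} : Finset X) ⊆ A := by
        intro x hx; simp only [Finset.mem_insert, Finset.mem_singleton] at hx
        rcases hx with rfl | rfl <;> assumption
      have hBne : ({a, b} : Finset X).Nonempty := ⟨a, by simp⟩
      have haB : a ∈ ({a, b} : Finset X) := by simp
      have hbB : b ∈ ({a, b} : Finset X) := by simp
      have heqa := hca A {a, b} hBne hBA a haB
      have heqb := hca A {a, b} hBne hBA b hbB
      refine ⟨by rw [heqa, heqb]; ring, ?_, ?_⟩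
      · intro h; rw [heqb, h, zero_mul]
      · intro hb0 ha0
        have hSpos : 0 < ∑ x ∈ ({a, b} : Finset X), p A x :=
          lt_of_lt_of_le ha0 (Finset.single_le_sum (fun x _ => hpos A x) haB)
        have h0 : p {a, b} b * ∑ x ∈ ({a, b} : Finset X), p A x = 0 := by
          rw [← heqb, hb0]
        rcases mul_eq_zero.mp h0 with h | h
        · exact h
        · exact absurd h hSpos.ne'
  · intro hoi A B hB hBA a haB
    have haA : a ∈ A := hBA haB
    have hAne : A.Nonempty := ⟨a, haA⟩
    by_cases hpa : p A a = 0
    · rw [hpa]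
      by_cases hS : ∑ b ∈ B, p A b = 0
      · rw [hS, mul_zero]
      · obtain ⟨b, hbB, hpb⟩ := Finset.exists_ne_zero_of_sum_ne_zero hS
        have hpb' : 0 < p A b := lt_of_le_of_ne (hpos A b) (Ne.symm hpb)
        obtain ⟨_, _, h3⟩ := hoi A hAne b (hBA hbB) a haA (fun h => hpb h.1)
        have hba0 : p {b, a} a = 0 := h3 hpa hpb'
        by_cases hpBa : p B a = 0
        · rw [hpBa, zero_mul]
        · obtain ⟨_, h2', _⟩ := hoi B hB b hbB a haB (fun h => hpBa h.2)
          exact absurd (h2' hba0) hpBa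
    · have hpa' : 0 < p A a := lt_of_le_of_ne (hpos A a) (Ne.symm hpa)
      have key : ∀ b ∈ B, p A b * p B a = p A a * p B b := by
        intro b hbB
        by_cases hab : b = a
        · subst hab; ring
        · by_cases hBzero : p B a = 0 ∧ p B b = 0
          · rw [hBzero.1, hBzero.2]; ring
          · obtain ⟨h1A, h2A, _⟩ := hoi A hAne a haA b (hBA hbB) (fun h => hpa h.1)
            obtain ⟨h1B, h2B, _⟩ := hoi B hB a haB b hbB hBzero
            obtain ⟨_, h2A', _⟩ := hoi A hAne b (hBA hbB) a haA (fun h => hpa h.2)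
            have hpair : ({b, a} : Finset X) = {a, b} := Finset.pair_comm b a
            rw [hpair] at h2A'
            by_cases hqa : p {a, b} a = 0
            · exact absurd (h2A' hqa) hpa
            · by_cases hqb : p {a, b} b = 0
              · rw [h2A hqb, h2B hqb]; ring
              · apply mul_left_cancel₀ hqa
                linear_combination p B a * h1A - p A a * h1B
      have hmain : p B a * ∑ b ∈ B, p A b = p A a * ∑ b ∈ B, p B b := by
        rw [Finset.mul_sum, Finset.mul_sum]
        refine Finset.sum_congr rfl fun b hb => ?_
        rw [mul_comm (p B a), key b hb]
      rw [hsum B hB, mul_one] at hmain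
      exact hmain.symm
end

section
/- Let u, α : X → ℝ and for λ > 0 let p_λ(a,A) = e^{u(a)/λ + α(a)}/Σ_{b∈A} e^{u(b)/λ + α(b)} (the multinomial logit with noise level λ). Then for every finite nonempty A and a ∈ A, lim_{λ→0⁺} p_λ(a,A) = e^{α(a)}/Σ_{b∈argmax_A u} e^{α(b)} if a ∈ argmax_{b∈A} u(b), and the limit is 0 otherwise. -/
open scoped Classical

/-- Key pointwise limit: `exp (c/λ + d) → (if c = 0 then exp d else 0)` as `λ → 0⁺`,
for `c ≤ 0`. -/
lemma aux_exp_term_limit {c : ℝ} (d : ℝ) (hc : c ≤ 0) :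
    Filter.Tendsto (fun lam : ℝ => Real.exp (c / lam + d))
      (nhdsWithin 0 (Set.Ioi 0)) (nhds (if c = 0 then Real.exp d else 0)) := by
  rcases eq_or_lt_of_le hc with h | h
  · subst h; simp
  · rw [if_neg h.ne]
    have h1 : Filter.Tendsto (fun lam : ℝ => c / lam + d)
        (nhdsWithin 0 (Set.Ioi 0)) Filter.atBot := by
      apply Filter.tendsto_atBot_add_const_right
      have h2 : Filter.Tendsto (fun lam : ℝ => (-c) * lam⁻¹)
          (nhdsWithin 0 (Set.Ioi 0)) Filter.atTop :=
        Filter.Tendsto.const_mul_atTop (by linarith) tendsto_inv_nhdsGT_zero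
      have h3 := Filter.tendsto_neg_atTop_atBot.comp h2
      have : (fun lam : ℝ => -((-c) * lam⁻¹)) = fun lam : ℝ => c / lam := by
        funext x; field_simp
      rwa [Function.comp_def, this] at h3
    exact Real.tendsto_exp_atBot.comp h1

/-- As the noise level `λ → 0⁺`, the multinomial logit
`p_λ(a,A) = e^{u(a)/λ+α(a)}/Σ_{b∈A} e^{u(b)/λ+α(b)}` converges to the Luce
tie-breaking rule on `argmax_A u`: the limit is `e^{α(a)}/Σ_{b∈argmax_A u} e^{α(b)}`
if `a ∈ argmax_A u` and `0` otherwise. -/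
theorem logit_vanishing_noise_limit
    {X : Type*} [DecidableEq X] (u α : X → ℝ)
    (A : Finset X) (hA : A.Nonempty) (a : X) (ha : a ∈ A) :
    Filter.Tendsto
      (fun lam : ℝ =>
        Real.exp (u a / lam + α a) / ∑ b ∈ A, Real.exp (u b / lam + α b))
      (nhdsWithin 0 (Set.Ioi 0))
      (nhds (if a ∈ A.filter (fun z => ∀ b ∈ A, u b ≤ u z) then
        Real.exp (α a) / ∑ b ∈ A.filter (fun z => ∀ c ∈ A, u c ≤ u z), Real.exp (α b)
      else 0)) := by
  set M := A.sup' hA u with hM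
  have hmem : ∀ z, (z ∈ A.filter (fun z => ∀ b ∈ A, u b ≤ u z)) ↔ z ∈ A ∧ u z = M := by
    intro z
    simp only [Finset.mem_filter]
    constructor
    · rintro ⟨hz, h⟩
      exact ⟨hz, le_antisymm (Finset.le_sup' u hz) (Finset.sup'_le hA u h)⟩
    · rintro ⟨hz, h⟩
      exact ⟨hz, fun b hb => h ▸ Finset.le_sup' u hb⟩
  have hfilt : A.filter (fun z => ∀ b ∈ A, u b ≤ u z) = A.filter (fun z => u z = M) := by
    ext z; rw [hmem z, Finset.mem_filter]
  -- the limiting denominator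
  set S : ℝ := ∑ b ∈ A.filter (fun z => u z = M), Real.exp (α b) with hS
  have hSpos : 0 < S := by
    apply Finset.sum_pos (fun b _ => Real.exp_pos _)
    obtain ⟨b, hb, hbM⟩ := Finset.exists_mem_eq_sup' hA u
    exact ⟨b, Finset.mem_filter.2 ⟨hb, hbM.symm⟩⟩
  -- rewrite the function on Ioi 0
  have hcong : ∀ lam ∈ Set.Ioi (0:ℝ),
      Real.exp (u a / lam + α a) / ∑ b ∈ A, Real.exp (u b / lam + α b)
      = Real.exp ((u a - M) / lam + α a) /
          ∑ b ∈ A, Real.exp ((u b - M) / lam + α b) := by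
    intro lam hlam
    have hlam0 : lam ≠ 0 := ne_of_gt hlam
    have key : ∀ b : X, Real.exp (u b / lam + α b)
        = Real.exp ((u b - M) / lam + α b) * Real.exp (M / lam) := by
      intro b
      rw [← Real.exp_add]
      congr 1
      field_simp
      ring
    rw [key a, Finset.sum_congr rfl (fun b _ => key b), ← Finset.sum_mul,
      mul_div_mul_right _ _ (Real.exp_ne_zero _)]
  -- limits of numerator and denominator
  have hnum : Filter.Tendsto (fun lam : ℝ => Real.exp ((u a - M) / lam + α a))
      (nhdsWithin 0 (Set.Ioi 0)) (nhds (if u a - M = 0 then Real.exp (α a) else 0)) :=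
    aux_exp_term_limit (α a) (by rw [sub_nonpos]; exact Finset.le_sup' u ha)
  have hden : Filter.Tendsto (fun lam : ℝ => ∑ b ∈ A, Real.exp ((u b - M) / lam + α b))
      (nhdsWithin 0 (Set.Ioi 0))
      (nhds (∑ b ∈ A, if u b - M = 0 then Real.exp (α b) else 0)) :=
    tendsto_finset_sum A (fun b hb =>
      aux_exp_term_limit (α b) (by rw [sub_nonpos]; exact Finset.le_sup' u hb))
  have hdenval : (∑ b ∈ A, if u b - M = 0 then Real.exp (α b) else 0) = S := by
    rw [hS, Finset.sum_filter]
    exact Finset.sum_congr rfl (fun b _ => by simp [sub_eq_zero])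
  rw [hdenval] at hden
  have hdiv := hnum.div hden (ne_of_gt hSpos)
  have hfinal := (Filter.tendsto_congr' (by
      filter_upwards [self_mem_nhdsWithin] with lam hlam using (hcong lam hlam).symm)).1 hdiv
  convert hfinal using 2
  rw [hfilt]
  by_cases h : u a = M
  · simp [Finset.mem_filter, ha, h, hS]
  · simp [Finset.mem_filter, h, sub_eq_zero]
end
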